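/- arXiv:2312.13809 — 6 statements merged into one kernel-verified Lean document; each statement's English description precedes it below -/
import Mathlib

section
/- Let n ∈ ℕ and let r = p/q be a rational function where p, q are complex polynomials of degree ≤ n and q ≢ 0. The following are equivalent: (i) r is unitary, i.e. |r(ix)| = 1 for every x ∈ ℝ that is not a pole of r; (ii) r ∈ 𝒰_n, i.e. there exists a complex polynomial w of degree ≤ n, w ≢ 0, such that r = w†/w as rational functions; (iii) there exist θ ∈ ℝ, m ≤ n and s_1,…,s_m ∈ ℂ such that r(z) = (−1)^m e^{iθ} ∏_{j=1}^m (z + conj(s_j))/(z − s_j) for all z ∈ ℂ away from poles. -/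
open Polynomial

noncomputable section

/-- `p†(z) := conj(p)(−z)`: conjugate the coefficients of `p` and substitute `−z`. -/
def pdag (p : Polynomial ℂ) : Polynomial ℂ :=
  (p.map (starRingEnd ℂ)).comp (-Polynomial.X)

/-- `𝒰 n`: the unitary rational functions of degree `(n,n)`, i.e. rational functions
of the form `p†/p` with `p` a nonzero complex polynomial of degree at most `n`. -/
def unitaryClass (n : ℕ) : Set (RatFunc ℂ) :=
  {r | ∃ p : Polynomial ℂ, p ≠ 0 ∧ p.natDegree ≤ n ∧ r = RatFunc.mk (pdag p) p}

/-- Evaluation of a rational function at the imaginary point `i·x`. -/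
def ieval (r : RatFunc ℂ) (x : ℝ) : ℂ :=
  RatFunc.eval (RingHom.id ℂ) (Complex.I * (x : ℂ)) r

/-- The uniform approximation error `‖r − exp(ω·)‖ = sup_{x∈[−1,1]} |r(ix) − e^{iωx}|`. -/
def errNorm (ω : ℝ) (r : RatFunc ℂ) : ℝ :=
  sSup ((fun x : ℝ => ‖ieval r x - Complex.exp (Complex.I * ω * x)‖) ''
    Set.Icc (-1 : ℝ) 1)

/-- The maximal phase error `max_{x∈[−1,1]} |g(x) − ωx|`. -/
def phaseErrSup (ω : ℝ) (g : ℝ → ℝ) : ℝ :=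
  sSup ((fun x : ℝ => |g x - ω * x|) '' Set.Icc (-1 : ℝ) 1)

/-- `g` is a phase function for `r ∈ 𝒰 n`: for some `m ≤ n`, `θ ∈ ℝ` and poles
`s j = ξ j + i μ j` with `ξ j ≠ 0`, `r` has the product representation
`r(z) = (−1)^m e^{iθ} ∏ (z + conj s_j)/(z − s_j)` and
`g(x) = θ + 2 Σ_j arctan((x − μ j)/ξ j)` with `r(ix) = e^{i g(x)}`. -/
def IsPhaseFun (n : ℕ) (r : RatFunc ℂ) (g : ℝ → ℝ) : Prop :=
  ∃ (m : ℕ) (θ : ℝ) (μ ξ : Fin m → ℝ), m ≤ n ∧ (∀ j, ξ j ≠ 0) ∧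
    r = RatFunc.mk
      (Polynomial.C ((-1 : ℂ) ^ m * Complex.exp (θ * Complex.I)) *
        ∏ j, (Polynomial.X + Polynomial.C (starRingEnd ℂ ((ξ j : ℂ) + (μ j : ℂ) * Complex.I))))
      (∏ j, (Polynomial.X - Polynomial.C ((ξ j : ℂ) + (μ j : ℂ) * Complex.I))) ∧
    (∀ x : ℝ, g x = θ + 2 * ∑ j, Real.arctan ((x - μ j) / ξ j)) ∧
    (∀ x : ℝ, ieval r x = Complex.exp (Complex.I * g x))

/-- The phase error of `g` equioscillates between `m` points in `[−1,1]`. -/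
def EquiOsc (ω : ℝ) (g : ℝ → ℝ) (m : ℕ) : Prop :=
  ∃ (η : Fin m → ℝ) (ε : ℝ), StrictMono η ∧ (∀ j, η j ∈ Set.Icc (-1 : ℝ) 1) ∧
    (ε = 1 ∨ ε = -1) ∧
    ∀ j : Fin m, g (η j) - ω * η j = ε * (-1 : ℝ) ^ (j : ℕ) * phaseErrSup ω g

end

namespace MyAux

lemma pdag_mul (p q : ℂ[X]) : pdag (p*q) = pdag p * pdag q := by
  simp [pdag, Polynomial.map_mul, mul_comp]

lemma pdag_C (a : ℂ) : pdag (C a) = C ((starRingEnd ℂ) a) := by simp [pdag]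

lemma pdag_pdag (p : ℂ[X]) : pdag (pdag p) = p := by
  simp only [pdag, map_comp, Polynomial.map_neg, Polynomial.map_X, Polynomial.map_map]
  rw [comp_assoc]
  simp only [neg_comp, X_comp, neg_neg]
  rw [show (starRingEnd ℂ).comp (starRingEnd ℂ) = RingHom.id ℂ from RingHom.ext (fun z => Complex.conj_conj z)]
  simp

lemma pdag_ne_zero {p : ℂ[X]} (hp : p ≠ 0) : pdag p ≠ 0 := by
  intro h
  apply hp
  rw [← pdag_pdag p, h]
  simp [pdag]

lemma natDegree_pdag (p : ℂ[X]) : (pdag p).natDegree = p.natDegree := by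
  simp [pdag, natDegree_comp, natDegree_map]

lemma pdag_eval (p : ℂ[X]) (x : ℝ) :
    (pdag p).eval (Complex.I * x) = (starRingEnd ℂ) (p.eval (Complex.I * x)) := by
  have h : -(Complex.I * x) = (starRingEnd ℂ) (Complex.I * x) := by
    simp [Complex.ext_iff]
  rw [pdag, eval_comp]
  simp only [eval_neg, eval_X]
  rw [h, Polynomial.eval_map, Polynomial.eval₂_hom]

lemma pdag_X_sub_C (s : ℂ) : pdag (X - C s) = -(X + C ((starRingEnd ℂ) s)) := by
  simp [pdag, sub_comp]
  ring

noncomputable def pdagHom : ℂ[X] →+* ℂ[X] where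
  toFun := pdag
  map_one' := by simp [pdag]
  map_mul' := pdag_mul
  map_zero' := by simp [pdag]
  map_add' := fun p q => by simp [pdag, Polynomial.map_add, add_comp]

lemma pdag_prod {m : ℕ} (f : Fin m → ℂ[X]) : pdag (∏ j, f j) = ∏ j, pdag (f j) :=
  map_prod pdagHom f Finset.univ

end MyAux

namespace MyAux

lemma comp_IX_eq_zero {F : ℂ[X]} (h : F.comp (C Complex.I * X) = 0) : F = 0 := by
  have h2 : (C Complex.I * X).comp (C (-Complex.I) * X) = X := by
    rw [mul_comp, C_comp, X_comp, ← mul_assoc, ← C_mul]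
    norm_num
  have : (F.comp (C Complex.I * X)).comp (C (-Complex.I) * X) = F := by
    rw [comp_assoc, h2, comp_X]
  rw [h, zero_comp] at this
  exact this.symm

lemma finite_bad {q : ℂ[X]} (hq : q ≠ 0) : {x : ℝ | q.eval (Complex.I * x) = 0}.Finite := by
  set Q := q.comp (C Complex.I * X) with hQ
  have hQ0 : Q ≠ 0 := fun h => hq (comp_IX_eq_zero h)
  have hfin : {z : ℂ | Q.IsRoot z}.Finite := Polynomial.finite_setOf_isRoot hQ0
  have hsub : {x : ℝ | q.eval (Complex.I * x) = 0} ⊆ (fun x : ℝ => (x : ℂ)) ⁻¹' {z : ℂ | Q.IsRoot z} := by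
    intro x hx
    simp only [Set.mem_preimage, Set.mem_setOf_eq, IsRoot, hQ, eval_comp, eval_mul, eval_C, eval_X]
    exact hx
  exact (hfin.preimage (fun a _ b _ hab => Complex.ofReal_injective hab)).subset hsub

lemma eq_of_eval_I (F G : ℂ[X]) (q : ℂ[X]) (hq : q ≠ 0)
    (h : ∀ x : ℝ, q.eval (Complex.I * x) ≠ 0 → F.eval (Complex.I * x) = G.eval (Complex.I * x)) :
    F = G := by
  have key : (F - G).comp (C Complex.I * X) = 0 := by
    apply Polynomial.eq_zero_of_infinite_isRoot
    have hsub : (fun x : ℝ => (x : ℂ)) '' {x : ℝ | q.eval (Complex.I * x) ≠ 0} ⊆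
        {z | ((F - G).comp (C Complex.I * X)).IsRoot z} := by
      rintro _ ⟨x, hx, rfl⟩
      simp only [Set.mem_setOf_eq, IsRoot, eval_comp, eval_mul, eval_C, eval_X, eval_sub]
      rw [h x hx]; ring
    apply Set.Infinite.mono hsub
    apply Set.Infinite.image (fun a _ b _ hab => Complex.ofReal_injective hab)
    exact ((finite_bad hq).infinite_compl).mono (fun x hx => hx)
  have h0 := comp_IX_eq_zero key
  linear_combination (norm := ring_nf) h0

lemma abs_eq_key {p q : ℂ[X]} (hq0 : q ≠ 0) :
    (∀ x : ℝ, q.eval (Complex.I * (x : ℂ)) ≠ 0 →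
        ‖p.eval (Complex.I * (x : ℂ)) / q.eval (Complex.I * (x : ℂ))‖ = 1) ↔
      p * pdag p = q * pdag q := by
  constructor
  · intro h
    apply eq_of_eval_I _ _ q hq0
    intro x hx
    have h1 := h x hx
    rw [norm_div, div_eq_one_iff_eq (by simpa using hx)] at h1
    simp only [eval_mul, pdag_eval]
    rw [Complex.mul_conj, Complex.mul_conj, ← Complex.sq_norm, ← Complex.sq_norm, h1]
  · intro h x hx
    have := congrArg (fun F : ℂ[X] => F.eval (Complex.I * x)) h
    simp only [eval_mul, pdag_eval, Complex.mul_conj, ← Complex.sq_norm] at this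
    have habs : ‖p.eval (Complex.I * x)‖ = ‖q.eval (Complex.I * x)‖ := by
      have h2 : ‖p.eval (Complex.I * x)‖ ^ 2 = ‖q.eval (Complex.I * x)‖ ^ 2 := by
        exact_mod_cast this
      nlinarith [norm_nonneg (p.eval (Complex.I * x)), norm_nonneg (q.eval (Complex.I * x))]
    rw [norm_div, habs, div_self (by simpa using hx)]

lemma mk_eq_mk {p q p' q' : ℂ[X]} (hq : q ≠ 0) (hq' : q' ≠ 0) (h : p * q' = p' * q) :
    RatFunc.mk p q = RatFunc.mk p' q' := by
  rw [RatFunc.mk_eq_div, RatFunc.mk_eq_div, div_eq_div_iff (RatFunc.algebraMap_ne_zero hq)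
    (RatFunc.algebraMap_ne_zero hq'), ← map_mul, ← map_mul, h]

lemma mk_eq_mk_iff {p q p' q' : ℂ[X]} (hq : q ≠ 0) (hq' : q' ≠ 0) :
    RatFunc.mk p q = RatFunc.mk p' q' ↔ p * q' = p' * q := by
  rw [RatFunc.mk_eq_div, RatFunc.mk_eq_div, div_eq_div_iff (RatFunc.algebraMap_ne_zero hq)
    (RatFunc.algebraMap_ne_zero hq'), ← map_mul, ← map_mul]
  exact ⟨fun h => RatFunc.algebraMap_injective ℂ h, fun h => congrArg _ h⟩

lemma key_of_mk {p q w : ℂ[X]} (hq0 : q ≠ 0) (hw0 : w ≠ 0)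
    (h : RatFunc.mk p q = RatFunc.mk (pdag w) w) : p * pdag p = q * pdag q := by
  rw [mk_eq_mk_iff hq0 hw0] at h
  have h2 := congrArg pdag h
  rw [pdag_mul, pdag_mul, pdag_pdag] at h2
  have h3 : (p * pdag p) * (w * pdag w) = (q * pdag q) * (w * pdag w) := by
    calc (p * pdag p) * (w * pdag w) = (p * w) * (pdag p * pdag w) := by ring
    _ = (pdag w * q) * (w * pdag q) := by rw [h, h2]
    _ = (q * pdag q) * (w * pdag w) := by ring
  exact mul_right_cancel₀ (mul_ne_zero hw0 (pdag_ne_zero hw0)) h3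

lemma mk_of_key {n : ℕ} {p q : ℂ[X]} (hq : q.natDegree ≤ n) (hq0 : q ≠ 0)
    (h : p * pdag p = q * pdag q) :
    ∃ w : Polynomial ℂ, w ≠ 0 ∧ w.natDegree ≤ n ∧ RatFunc.mk p q = RatFunc.mk (pdag w) w := by
  classical
  have hp0 : p ≠ 0 := by
    intro hp
    rw [hp] at h
    exact (mul_ne_zero hq0 (pdag_ne_zero hq0)) (by simpa using h.symm)
  set d : ℂ[X] := GCDMonoid.gcd p q with hd
  have hd0 : d ≠ 0 := by
    intro h0
    exact hq0 ((gcd_eq_zero_iff p q).mp h0).2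
  set p' : ℂ[X] := p / d with hp'
  set q' : ℂ[X] := q / d with hq'
  have hpd : d * p' = p := EuclideanDomain.mul_div_cancel' hd0 (gcd_dvd_left p q)
  have hqd : d * q' = q := EuclideanDomain.mul_div_cancel' hd0 (gcd_dvd_right p q)
  have hco : IsCoprime p' q' := isCoprime_div_gcd_div_gcd hq0
  have hp0' : p' ≠ 0 := fun h0 => hp0 (by rw [← hpd, h0, mul_zero])
  have hq0' : q' ≠ 0 := fun h0 => hq0 (by rw [← hqd, h0, mul_zero])
  have key : p' * pdag p' = q' * pdag q' := by
    apply mul_left_cancel₀ (mul_ne_zero hd0 (pdag_ne_zero hd0))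
    calc (d * pdag d) * (p' * pdag p') = (d * p') * pdag (d * p') := by rw [pdag_mul]; ring
    _ = (d * q') * pdag (d * q') := by rw [hpd, hqd, h]
    _ = (d * pdag d) * (q' * pdag q') := by rw [pdag_mul]; ring
  -- q' divides pdag p'
  obtain ⟨t, ht⟩ : q' ∣ pdag p' := by
    apply hco.symm.dvd_of_dvd_mul_left
    exact ⟨pdag q', by linear_combination key⟩
  have hdeg : p'.natDegree = q'.natDegree := by
    have := congrArg natDegree key
    rw [natDegree_mul hp0' (pdag_ne_zero hp0'), natDegree_mul hq0' (pdag_ne_zero hq0'),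
      natDegree_pdag, natDegree_pdag] at this
    omega
  have ht0 : t ≠ 0 := by
    intro h0
    exact pdag_ne_zero hp0' (by rw [ht, h0, mul_zero])
  have htdeg : t.natDegree = 0 := by
    have := congrArg natDegree ht
    rw [natDegree_pdag, natDegree_mul hq0' ht0, hdeg] at this
    omega
  obtain ⟨c, hc⟩ : ∃ c : ℂ, t = C c := ⟨t.coeff 0, eq_C_of_natDegree_eq_zero htdeg⟩
  have hc0 : c ≠ 0 := fun h0 => ht0 (by rw [hc, h0, map_zero])
  -- p' = pdag q' * C (conj c)
  have hpq : p' = pdag q' * C ((starRingEnd ℂ) c) := by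
    have := congrArg pdag ht
    rw [pdag_pdag, pdag_mul, hc, pdag_C] at this
    exact this
  -- |c| = 1
  have hcc : (starRingEnd ℂ) c * c = 1 := by
    have h2 : (q' * pdag q') * (C ((starRingEnd ℂ) c) * C c) = (q' * pdag q') * 1 := by
      rw [mul_one]
      calc (q' * pdag q') * (C ((starRingEnd ℂ) c) * C c)
          = (pdag q' * C ((starRingEnd ℂ) c)) * (q' * C c) := by ring
      _ = p' * pdag p' := by rw [← hpq, ← hc, ← ht]
      _ = q' * pdag q' := key
    have h3 := mul_left_cancel₀ (mul_ne_zero hq0' (pdag_ne_zero hq0')) h2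
    rw [← C_mul, ← map_one C] at h3
    exact C_injective h3
  set u : ℂ := Complex.exp ((c.arg / 2 : ℝ) * Complex.I) with hu
  have hu2 : u * u = c := by
    rw [hu, ← Complex.exp_add]
    have habs : ‖c‖ = 1 := by
      have := Complex.normSq_eq_conj_mul_self (z := c)
      rw [hcc] at this
      have h3 : Complex.normSq c = 1 := by exact_mod_cast this
      rw [← Complex.sq_norm] at h3
      nlinarith [norm_nonneg c]
    have := Complex.norm_mul_exp_arg_mul_I c
    rw [habs] at this
    push_cast at this ⊢
    rw [show (c.arg : ℂ) / 2 * Complex.I + (c.arg : ℂ) / 2 * Complex.I = c.arg * Complex.I by ring]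
    simpa using this
  have huu : (starRingEnd ℂ) u * u = 1 := by
    rw [hu, ← Complex.exp_conj, ← Complex.exp_add, map_mul, Complex.conj_I, Complex.conj_ofReal]
    rw [show ((c.arg / 2 : ℝ) : ℂ) * -Complex.I + ((c.arg / 2 : ℝ) : ℂ) * Complex.I = 0 by ring,
      Complex.exp_zero]
  have hu0 : u ≠ 0 := by
    intro h0; rw [h0, mul_zero] at huu; exact one_ne_zero huu.symm
  refine ⟨C u * q', mul_ne_zero (by simpa using hu0) hq0', ?_, ?_⟩
  · rw [natDegree_C_mul hu0]
    exact le_trans (natDegree_le_of_dvd ⟨d, by rw [← hqd]; ring⟩ hq0) hq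
  · apply mk_eq_mk hq0 (mul_ne_zero (by simpa using hu0) hq0')
    rw [pdag_mul, pdag_C, ← hpd, ← hqd, hpq]
    have hcu : (starRingEnd ℂ) c * u = (starRingEnd ℂ) u := by
      have : (starRingEnd ℂ) c = (starRingEnd ℂ) u * (starRingEnd ℂ) u := by
        rw [← map_mul, hu2]
      rw [this, mul_assoc, huu, mul_one]
    calc (d * (pdag q' * C ((starRingEnd ℂ) c))) * (C u * q')
        = (d * q') * pdag q' * (C ((starRingEnd ℂ) c) * C u) := by ring
    _ = (d * q') * pdag q' * C ((starRingEnd ℂ) u) := by rw [← C_mul, hcu]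
    _ = C ((starRingEnd ℂ) u) * pdag q' * (d * q') := by ring


lemma prod_X_sub_C_ne_zero {m : ℕ} (s : Fin m → ℂ) : (∏ j, (X - C (s j))) ≠ 0 :=
  (monic_prod_of_monic Finset.univ _ (fun j _ => monic_X_sub_C (s j))).ne_zero

lemma pdag_prod_X_sub_C {m : ℕ} (s : Fin m → ℂ) :
    pdag (∏ j, (X - C (s j))) = (-1 : ℂ[X]) ^ m * ∏ j, (X + C ((starRingEnd ℂ) (s j))) := by
  rw [pdag_prod]
  simp only [pdag_X_sub_C]
  rw [show (fun j => -(X + C ((starRingEnd ℂ) (s j)))) =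
    (fun j => (-1 : ℂ[X]) * (X + C ((starRingEnd ℂ) (s j)))) from funext (fun j => by ring)]
  rw [Finset.prod_mul_distrib, Finset.prod_const, Finset.card_univ, Fintype.card_fin]

lemma mk_to_prod {n : ℕ} {w : ℂ[X]} (hw0 : w ≠ 0) (hwn : w.natDegree ≤ n) :
    ∃ (m : ℕ) (θ : ℝ) (s : Fin m → ℂ), m ≤ n ∧
      RatFunc.mk (pdag w) w = RatFunc.mk
        (Polynomial.C ((-1 : ℂ) ^ m * Complex.exp (θ * Complex.I)) *
          ∏ j, (Polynomial.X + Polynomial.C (starRingEnd ℂ (s j))))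
        (∏ j, (Polynomial.X - Polynomial.C (s j))) := by
  classical
  set m := w.natDegree with hm
  set c := w.leadingCoeff with hcdef
  have hc0 : c ≠ 0 := leadingCoeff_ne_zero.mpr hw0
  have hsplit : Splits w := IsAlgClosed.splits w
  set l := w.roots.toList with hl
  have hlen : l.length = m := by
    rw [hl, Multiset.length_toList]
    exact splits_iff_card_roots.mp hsplit
  set s : Fin m → ℂ := fun j => l.get (Fin.cast hlen.symm j) with hs
  have hP : (∏ j, (X - C (s j))) = (Multiset.map (fun a => X - C a) w.roots).prod := by
    rw [show w.roots = (l : Multiset ℂ) from (Multiset.coe_toList _).symm,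
      Multiset.map_coe, Multiset.prod_coe]
    conv_rhs => rw [← List.ofFn_get l, List.map_ofFn]
    rw [List.prod_ofFn]
    simp only [Function.comp]
    exact Fin.prod_congr' (fun i => X - C (l.get i)) hlen.symm
  have hw : w = C c * ∏ j, (X - C (s j)) := by
    rw [hP]; exact hsplit.eq_prod_roots
  set e : ℂ := (starRingEnd ℂ) c / c with he
  have habs : ‖e‖ = 1 := by
    rw [he, norm_div, Complex.norm_conj, div_self (norm_ne_zero_iff.mpr hc0)]
  have hexp : Complex.exp ((e.arg : ℂ) * Complex.I) = e := by
    have := Complex.norm_mul_exp_arg_mul_I e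
    rwa [habs, Complex.ofReal_one, one_mul] at this
  refine ⟨m, e.arg, s, hwn, ?_⟩
  apply mk_eq_mk hw0 (prod_X_sub_C_ne_zero s)
  have hpw : pdag w = C ((starRingEnd ℂ) c) *
      ((-1 : ℂ[X]) ^ m * ∏ j, (X + C ((starRingEnd ℂ) (s j)))) := by
    rw [hw, pdag_mul, pdag_C, pdag_prod_X_sub_C]
  rw [hpw, hexp]
  rw [hw]
  have hC : ((-1 : ℂ[X]) ^ m) = C ((-1 : ℂ) ^ m) := by
    rw [map_pow, map_neg, map_one]
  have hconst : C ((-1 : ℂ)^m) * C ((starRingEnd ℂ) c) = C ((-1 : ℂ)^m * e) * C c := by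
    rw [← C_mul, ← C_mul]
    congr 1
    rw [he]
    field_simp
  rw [hC]
  linear_combination ((∏ j, (X + C ((starRingEnd ℂ) (s j)))) * (∏ j, (X - C (s j)))) * hconst

lemma prod_to_mk {m : ℕ} (θ : ℝ) (s : Fin m → ℂ) :
    ∃ w : ℂ[X], w ≠ 0 ∧ w.natDegree = m ∧
      RatFunc.mk
        (Polynomial.C ((-1 : ℂ) ^ m * Complex.exp (θ * Complex.I)) *
          ∏ j, (Polynomial.X + Polynomial.C (starRingEnd ℂ (s j))))
        (∏ j, (Polynomial.X - Polynomial.C (s j))) = RatFunc.mk (pdag w) w := by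
  set u : ℂ := Complex.exp (-(θ/2 : ℝ) * Complex.I) with hu
  have hu0 : u ≠ 0 := Complex.exp_ne_zero _
  have hcu : (starRingEnd ℂ) u = Complex.exp ((θ/2 : ℝ) * Complex.I) := by
    rw [hu, ← Complex.exp_conj, map_mul, Complex.conj_I, map_neg, Complex.conj_ofReal]
    ring_nf
  have hrel : (starRingEnd ℂ) u = Complex.exp ((θ : ℂ) * Complex.I) * u := by
    rw [hcu, hu, ← Complex.exp_add]
    congr 1
    push_cast
    ring
  set P : ℂ[X] := ∏ j, (X - C (s j)) with hP
  refine ⟨C u * P, mul_ne_zero (by simpa using hu0) (prod_X_sub_C_ne_zero s), ?_, ?_⟩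
  · rw [hP, natDegree_C_mul hu0, natDegree_prod _ _ (fun j _ => X_sub_C_ne_zero (s j))]
    simp [natDegree_X_sub_C]
  · apply mk_eq_mk (prod_X_sub_C_ne_zero s) (mul_ne_zero (by simpa using hu0) (prod_X_sub_C_ne_zero s))
    rw [pdag_mul, pdag_C, hP, pdag_prod_X_sub_C]
    have hC : ((-1 : ℂ[X]) ^ m) = C ((-1 : ℂ) ^ m) := by
      rw [map_pow, map_neg, map_one]
    have hconst : C ((-1:ℂ)^m * Complex.exp ((θ:ℂ) * Complex.I)) * C u =
        C ((starRingEnd ℂ) u) * C ((-1:ℂ)^m) := by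
      rw [← C_mul, ← C_mul]
      congr 1
      rw [hrel]
      ring
    rw [hC]
    linear_combination ((∏ j, (X + C ((starRingEnd ℂ) (s j)))) * (∏ j, (X - C (s j)))) * hconst

end MyAux


/-- For `r = p/q` with `p, q` of degree ≤ n and `q ≠ 0`, the following are
equivalent: (i) `|r(ix)| = 1` for all real `x` that are not poles; (ii) `r = w†/w` for some
nonzero `w` of degree ≤ n; (iii) `r(z) = (−1)^m e^{iθ} ∏_{j=1}^m (z + conj s_j)/(z − s_j)`
for some `θ ∈ ℝ`, `m ≤ n`, `s_1, …, s_m ∈ ℂ`. -/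
theorem unitary_rational_characterization (n : ℕ) (p q : Polynomial ℂ)
    (hp : p.natDegree ≤ n) (hq : q.natDegree ≤ n) (hq0 : q ≠ 0) :
    ((∀ x : ℝ, q.eval (Complex.I * (x : ℂ)) ≠ 0 →
        ‖p.eval (Complex.I * (x : ℂ)) / q.eval (Complex.I * (x : ℂ))‖ = 1) ↔
      (∃ w : Polynomial ℂ, w ≠ 0 ∧ w.natDegree ≤ n ∧
        RatFunc.mk p q = RatFunc.mk (pdag w) w)) ∧
    ((∃ w : Polynomial ℂ, w ≠ 0 ∧ w.natDegree ≤ n ∧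
        RatFunc.mk p q = RatFunc.mk (pdag w) w) ↔
      (∃ (m : ℕ) (θ : ℝ) (s : Fin m → ℂ), m ≤ n ∧
        RatFunc.mk p q = RatFunc.mk
          (Polynomial.C ((-1 : ℂ) ^ m * Complex.exp (θ * Complex.I)) *
            ∏ j, (Polynomial.X + Polynomial.C (starRingEnd ℂ (s j))))
          (∏ j, (Polynomial.X - Polynomial.C (s j))))) := by
  constructor
  · rw [MyAux.abs_eq_key hq0]
    exact ⟨fun h => MyAux.mk_of_key hq hq0 h,
      fun ⟨w, hw0, hwn, hmk⟩ => MyAux.key_of_mk hq0 hw0 hmk⟩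
  · constructor
    · rintro ⟨w, hw0, hwn, hmk⟩
      obtain ⟨m, θ, s, hmn, h2⟩ := MyAux.mk_to_prod hw0 hwn
      exact ⟨m, θ, s, hmn, hmk.trans h2⟩
    · rintro ⟨m, θ, s, hmn, hmk⟩
      obtain ⟨w, hw0, hwm, h2⟩ := MyAux.prod_to_mk θ s
      exact ⟨w, hw0, le_of_eq_of_le hwm hmn, hmk.trans h2⟩
end

section
/- Let n ∈ ℕ, ω ∈ ℝ, x_1,…,x_{2n+1} ∈ ℝ, and let p and q be complex polynomials of degree ≤ n with q ≢ 0, and let v : ℂ → ℂ be an entire function, such that p(z) − q(z)·e^{ωz} = (∏_{j=1}^{2n+1} (z − i x_j)) · v(z) for all z ∈ ℂ. Then p†(z)·p(z) = q†(z)·q(z) identically as polynomials; in particular |p(ix)| = |q(ix)| for all x ∈ ℝ, so the rational interpolant p/q to e^{ωz} at the nodes i x_1, …, i x_{2n+1} on the imaginary axis is unitary, i.e. lies in 𝒰_n. -/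
open Polynomial

section Aux

private lemma pdag_eval (p : Polynomial ℂ) (z : ℂ) :
    (pdag p).eval z = (starRingEnd ℂ) (p.eval (-(starRingEnd ℂ z))) := by
  rw [pdag, eval_comp, eval_neg, eval_X, eval_map,
    show -z = (starRingEnd ℂ) (-(starRingEnd ℂ z)) by simp, eval₂_at_apply]

private lemma pdag_pdag (p : Polynomial ℂ) : pdag (pdag p) = p :=
  Polynomial.funext fun z => by simp [pdag_eval]

private lemma pdag_add (p q : Polynomial ℂ) : pdag (p + q) = pdag p + pdag q :=
  Polynomial.funext fun z => by simp [pdag_eval]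

private lemma pdag_C_mul (a : ℂ) (p : Polynomial ℂ) :
    pdag (Polynomial.C a * p) = Polynomial.C ((starRingEnd ℂ) a) * pdag p :=
  Polynomial.funext fun z => by simp [pdag_eval]

private lemma natDegree_pdag_le (p : Polynomial ℂ) : (pdag p).natDegree ≤ p.natDegree := by
  refine natDegree_comp_le.trans ?_
  have : (-Polynomial.X : Polynomial ℂ).natDegree = 1 := by simp
  rw [this, mul_one]
  exact natDegree_map_le

private lemma prod_dvd_of_cont {ι : Type*} [DecidableEq ι] (c : ι → ℂ) (D : Polynomial ℂ)
    (s : Finset ι) : ∀ u : ℂ → ℂ, Continuous u →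
      (∀ z, D.eval z = (∏ j ∈ s, (z - c j)) * u z) →
      (∏ j ∈ s, (Polynomial.X - Polynomial.C (c j))) ∣ D := by
  induction s using Finset.induction_on generalizing D with
  | empty => intro u hu h; simp
  | @insert a s ha ih =>
    intro u hu h
    have hroot : D.eval (c a) = 0 := by
      have := h (c a); simpa [Finset.prod_insert ha] using this
    obtain ⟨E, hE⟩ : (Polynomial.X - Polynomial.C (c a)) ∣ D := dvd_iff_isRoot.mpr hroot
    have hEeq : ∀ z, E.eval z = (∏ j ∈ s, (z - c j)) * u z := by
      have hcont1 : Continuous fun z => E.eval z := E.continuous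
      have hcont2 : Continuous fun z => (∏ j ∈ s, (z - c j)) * u z := by
        exact (Continuous.mul (continuous_finset_prod _ fun j _ => by fun_prop) hu)
      have heq : Set.EqOn (fun z => E.eval z) (fun z => (∏ j ∈ s, (z - c j)) * u z)
          ({c a}ᶜ) := by
        intro z hz
        have hz' : z - c a ≠ 0 := sub_ne_zero.mpr hz
        have h1 := h z
        rw [hE, Finset.prod_insert ha] at h1
        simp only [eval_mul, eval_sub, eval_X, eval_C] at h1
        rw [mul_assoc] at h1
        exact mul_left_cancel₀ hz' h1
      have := Continuous.ext_on (dense_compl_singleton (c a)) hcont1 hcont2 heq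
      exact fun z => congrFun this z
    rw [Finset.prod_insert ha, hE]
    exact mul_dvd_mul_left _ (ih E u hu hEeq)

end Aux


/-- If `p, q` of degree ≤ n (`q ≠ 0`) and an entire function `v` satisfy the
linearized interpolation identity
`p(z) − q(z) e^{ωz} = (∏_{j=1}^{2n+1} (z − i x_j)) · v(z)` for all `z ∈ ℂ`, then
`p† p = q† q` as polynomials; in particular `|p(ix)| = |q(ix)|` for all real `x`, and the
rational interpolant `p/q` is unitary, i.e. lies in `𝒰_n`. -/
theorem rational_interpolant_unitary (n : ℕ) (ω : ℝ) (x : Fin (2 * n + 1) → ℝ)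
    (p q : Polynomial ℂ) (hp : p.natDegree ≤ n) (hq : q.natDegree ≤ n) (hq0 : q ≠ 0)
    (v : ℂ → ℂ) (hv : Differentiable ℂ v)
    (hint : ∀ z : ℂ, p.eval z - q.eval z * Complex.exp ((ω : ℂ) * z) =
      (∏ j, (z - Complex.I * ((x j : ℝ) : ℂ))) * v z) :
    pdag p * p = pdag q * q ∧
    (∀ t : ℝ, ‖p.eval (Complex.I * (t : ℂ))‖ =
      ‖q.eval (Complex.I * (t : ℂ))‖) ∧
    RatFunc.mk p q ∈ unitaryClass n := by
  have hvc : Continuous v := hv.continuous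
  set u : ℂ → ℂ := fun z => (pdag q).eval z * Complex.exp (-((ω : ℂ) * z)) * v z -
      (starRingEnd ℂ) (v (-(starRingEnd ℂ z))) * p.eval z with hu_def
  have hu_cont : Continuous u := by
    apply Continuous.sub
    · exact (((pdag q).continuous).mul (Complex.continuous_exp.comp (by fun_prop))).mul hvc
    · exact (continuous_star.comp (hvc.comp (continuous_star.neg))).mul p.continuous
  -- the conjugated interpolation identity
  have hdag : ∀ z : ℂ, (pdag p).eval z - (pdag q).eval z * Complex.exp (-((ω : ℂ) * z)) =
      -(∏ j, (z - Complex.I * ((x j : ℝ) : ℂ))) * (starRingEnd ℂ) (v (-(starRingEnd ℂ z))) := by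
    intro z
    have h := congrArg (starRingEnd ℂ) (hint (-(starRingEnd ℂ z)))
    rw [map_sub, map_mul, map_mul, map_prod] at h
    rw [pdag_eval p, pdag_eval q]
    have hexp : (starRingEnd ℂ) (Complex.exp ((ω : ℂ) * (-(starRingEnd ℂ z)))) =
        Complex.exp (-((ω : ℂ) * z)) := by
      rw [← Complex.exp_conj]
      congr 1
      simp [map_mul, Complex.conj_conj, Complex.conj_ofReal]
    have hprod : (∏ j, (starRingEnd ℂ) ((-(starRingEnd ℂ z)) - Complex.I * ((x j : ℝ) : ℂ))) =
        -(∏ j, (z - Complex.I * ((x j : ℝ) : ℂ))) := by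
      have h1 : ∀ j : Fin (2 * n + 1),
          (starRingEnd ℂ) ((-(starRingEnd ℂ z)) - Complex.I * ((x j : ℝ) : ℂ)) =
          (-1) * (z - Complex.I * ((x j : ℝ) : ℂ)) := by
        intro j
        simp [map_sub, map_neg, map_mul, Complex.conj_conj, Complex.conj_I, Complex.conj_ofReal]
        ring
      rw [Finset.prod_congr rfl (fun j _ => h1 j), Finset.prod_mul_distrib, Finset.prod_const,
        Finset.card_univ, Fintype.card_fin]
      have : ((-1 : ℂ)) ^ (2 * n + 1) = -1 := Odd.neg_one_pow ⟨n, by ring⟩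
      rw [this]; ring
    rw [hexp, hprod] at h
    exact h
  -- the divisibility identity
  set N : Polynomial ℂ := ∏ j, (Polynomial.X - Polynomial.C (Complex.I * ((x j : ℝ) : ℂ))) with hN_def
  set D : Polynomial ℂ := pdag p * p - pdag q * q with hD_def
  have hDN : ∀ z, D.eval z = (∏ j, (z - Complex.I * ((x j : ℝ) : ℂ))) * u z := by
    intro z
    have hexp1 : Complex.exp (-((ω : ℂ) * z)) * Complex.exp ((ω : ℂ) * z) = 1 := by
      rw [← Complex.exp_add]; simp
    have h1 := hint z
    have h2 := hdag z
    simp only [hD_def, eval_sub, eval_mul, hu_def]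
    linear_combination (p.eval z) * h2 +
      ((pdag q).eval z * Complex.exp (-((ω : ℂ) * z))) * h1 +
      ((pdag q).eval z * q.eval z) * hexp1
  have hdvd : N ∣ D := by
    apply prod_dvd_of_cont (fun j => Complex.I * ((x j : ℝ) : ℂ)) D Finset.univ u hu_cont
    intro z
    exact hDN z
  -- degree considerations force D = 0
  have hNmonic : N.Monic := monic_prod_of_monic _ _ fun j _ => monic_X_sub_C _
  have hNdeg : N.natDegree = 2 * n + 1 := by
    rw [hN_def, natDegree_prod_of_monic _ _ fun j _ => monic_X_sub_C _]
    rw [Finset.sum_congr rfl fun j _ => natDegree_X_sub_C (Complex.I * ((x j : ℝ) : ℂ))]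
    simp [Finset.card_univ]
  have hDdeg : D.natDegree ≤ 2 * n := by
    have h1 := (natDegree_pdag_le p).trans hp
    have h2 := (natDegree_pdag_le q).trans hq
    refine (natDegree_sub_le _ _).trans (max_le ?_ ?_)
    · exact natDegree_mul_le.trans (by omega)
    · exact natDegree_mul_le.trans (by omega)
  have hD0 : D = 0 := by
    by_contra hne
    obtain ⟨Q, hQ⟩ := hdvd
    have hQ0 : Q ≠ 0 := by rintro rfl; rw [mul_zero] at hQ; exact hne hQ
    have : D.natDegree = N.natDegree + Q.natDegree := by
      rw [hQ, natDegree_mul hNmonic.ne_zero hQ0]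
    omega
  have hmain : pdag p * p = pdag q * q := sub_eq_zero.mp hD0
  refine ⟨hmain, ?_, ?_⟩
  · -- equality of absolute values on the imaginary axis
    intro t
    have harg : -((starRingEnd ℂ) (Complex.I * (t : ℂ))) = Complex.I * (t : ℂ) := by
      simp [map_mul, Complex.conj_I, Complex.conj_ofReal]
    have hkey : ∀ r : Polynomial ℂ, (pdag r).eval (Complex.I * (t : ℂ)) =
        (starRingEnd ℂ) (r.eval (Complex.I * (t : ℂ))) := by
      intro r
      rw [pdag_eval, harg]
    have h := congrArg (Polynomial.eval (Complex.I * (t : ℂ))) hmain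
    simp only [eval_mul, hkey] at h
    rw [← Complex.normSq_eq_conj_mul_self, ← Complex.normSq_eq_conj_mul_self] at h
    have hsq : Complex.normSq (p.eval (Complex.I * (t : ℂ))) =
        Complex.normSq (q.eval (Complex.I * (t : ℂ))) := by
      exact_mod_cast h
    rw [Complex.norm_def, Complex.norm_def, hsq]
  · -- membership in the unitary class
    by_cases hP : pdag p + q ≠ 0
    · refine ⟨pdag p + q, hP, ?_, ?_⟩
      · exact (natDegree_add_le _ _).trans (max_le ((natDegree_pdag_le p).trans hp) hq)
      · rw [RatFunc.mk_eq_mk hq0 hP, pdag_add, pdag_pdag]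
        linear_combination hmain
    · push_neg at hP
      have hpd : pdag p = -q := eq_neg_of_add_eq_zero_left hP
      set P : Polynomial ℂ := Polynomial.C Complex.I * pdag p - Polynomial.C Complex.I * q
        with hPdef
      have hP2 : P = Polynomial.C (-(2 * Complex.I)) * q := by
        rw [hPdef, hpd]
        simp only [map_neg, map_mul, map_ofNat]
        ring
      have hPne : P ≠ 0 := by
        rw [hP2]
        intro h0
        rcases mul_eq_zero.mp h0 with h1 | h1
        · rw [Polynomial.C_eq_zero] at h1
          exact two_ne_zero (by
            have := neg_eq_zero.mp h1
            have h2 : (2 : ℂ) * Complex.I = 0 := this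
            rcases mul_eq_zero.mp h2 with h3 | h3
            · exact_mod_cast h3
            · exact absurd h3 Complex.I_ne_zero)
        · exact hq0 h1
      refine ⟨P, hPne, ?_, ?_⟩
      · refine (natDegree_sub_le _ _).trans (max_le ?_ ?_)
        · exact (natDegree_C_mul_le _ _).trans ((natDegree_pdag_le p).trans hp)
        · exact (natDegree_C_mul_le _ _).trans hq
      · have hPdag : pdag P = Polynomial.C Complex.I * pdag q - Polynomial.C Complex.I * p :=
          Polynomial.funext fun z => by
            simp only [hPdef, pdag_eval, eval_sub, eval_mul, eval_C, map_sub, map_mul,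
              Complex.conj_I, Complex.conj_conj, map_neg, neg_neg]
            ring
        rw [RatFunc.mk_eq_mk hq0 hPne, hPdag, hPdef]
        linear_combination (Polynomial.C Complex.I) * hmain
end

section
/- For every degree n ∈ ℕ and every ω > 0 there exists a unitary rational best approximation: some r ∈ 𝒰_n with ‖r − exp(ω·)‖ = inf_{u ∈ 𝒰_n} ‖u − exp(ω·)‖. -/
open Polynomial

/-! ### Auxiliary lemmas -/

open Filter Topology

noncomputable section AuxiliaryLemmas

lemma pdag_mul' (p q : ℂ[X]) : pdag (p * q) = pdag p * pdag q := by
  simp [pdag, Polynomial.map_mul, mul_comp]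

lemma pdag_C_mul' (c : ℂ) (p : ℂ[X]) : pdag (C c * p) = C (starRingEnd ℂ c) * pdag p := by
  simp [pdag, Polynomial.map_mul, mul_comp]

lemma pdag_X_sub_C' (a : ℂ) : pdag (X - C a) = -(X + C (starRingEnd ℂ a)) := by
  simp [pdag, Polynomial.map_sub, sub_comp, neg_comp]
  ring

lemma mk_mul_cancel' (d a b : ℂ[X]) (hd : d ≠ 0) :
    RatFunc.mk (d * a) (d * b) = RatFunc.mk a b := by
  rw [RatFunc.mk_eq_div, RatFunc.mk_eq_div, map_mul, map_mul,
    mul_div_mul_left _ _ (RatFunc.algebraMap_ne_zero hd)]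

lemma exists_good' : ∀ (N : ℕ) (p : ℂ[X]), p.natDegree ≤ N → p ≠ 0 →
    ∃ q : ℂ[X], q ≠ 0 ∧ q.natDegree ≤ p.natDegree ∧
      (∀ x : ℝ, q.eval (Complex.I * x) ≠ 0) ∧
      RatFunc.mk (pdag p) p = RatFunc.mk (pdag q) q := by
  intro N
  induction N with
  | zero =>
    intro p hdeg hp
    refine ⟨p, hp, le_rfl, fun x hx => ?_, rfl⟩
    have := Polynomial.eq_C_of_natDegree_eq_zero (Nat.le_zero.mp hdeg)
    rw [this] at hx hp
    simp at hx
    exact hp (by rw [this, hx]; simp)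
  | succ N ih =>
    intro p hdeg hp
    by_cases hroot : ∃ x : ℝ, p.eval (Complex.I * x) = 0
    · obtain ⟨x, hx⟩ := hroot
      have hdvd : (X - C (Complex.I * x)) ∣ p := Polynomial.dvd_iff_isRoot.mpr hx
      obtain ⟨q0, hq0⟩ := hdvd
      have hd : (X - C (Complex.I * (x:ℂ))) ≠ 0 := Polynomial.X_sub_C_ne_zero _
      have hq0ne : q0 ≠ 0 := by rintro rfl; rw [mul_zero] at hq0; exact hp hq0
      have hdegq0 : q0.natDegree + 1 = p.natDegree := by
        rw [hq0, Polynomial.natDegree_mul hd hq0ne, Polynomial.natDegree_X_sub_C]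
        omega
      have hpd : pdag p = (X - C (Complex.I * x)) * (-pdag q0) := by
        rw [hq0, pdag_mul', pdag_X_sub_C']
        have : starRingEnd ℂ (Complex.I * x) = -(Complex.I * x) := by
          simp [Complex.ext_iff]
        rw [this, C_neg]
        ring
      have key : RatFunc.mk (pdag p) p = RatFunc.mk (-pdag q0) q0 := by
        rw [hpd, hq0, mk_mul_cancel' _ _ _ hd]
      have hCI : (C Complex.I * q0) ≠ 0 := by
        simp [Complex.I_ne_zero, hq0ne]
      obtain ⟨q, hqne, hqdeg, hqroot, hqmk⟩ := ih (C Complex.I * q0)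
        (by rw [Polynomial.natDegree_C_mul Complex.I_ne_zero]; omega) hCI
      refine ⟨q, hqne, ?_, hqroot, ?_⟩
      · calc q.natDegree ≤ (C Complex.I * q0).natDegree := hqdeg
          _ = q0.natDegree := Polynomial.natDegree_C_mul Complex.I_ne_zero
          _ ≤ p.natDegree := by omega
      · rw [key, ← hqmk, pdag_C_mul']
        have : starRingEnd ℂ Complex.I = -Complex.I := Complex.conj_I
        rw [this, C_neg, neg_mul_comm]
        exact (mk_mul_cancel' (C Complex.I) _ _ (by simp [Complex.I_ne_zero])).symm
    · push_neg at hroot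
      exact ⟨p, hp, le_rfl, hroot, rfl⟩

def poly (n : ℕ) (w : Fin (n+1) → ℂ) : ℂ[X] :=
  ∑ i : Fin (n+1), C (w i) * X ^ (i : ℕ)

lemma poly_coeff (n : ℕ) (w : Fin (n+1) → ℂ) (i : Fin (n+1)) :
    (poly n w).coeff i = w i := by
  rw [poly, Polynomial.finset_sum_coeff]
  rw [Finset.sum_eq_single i]
  · simp
  · intro j _ hj
    simp only [Polynomial.coeff_C_mul, Polynomial.coeff_X_pow]
    rw [if_neg (by exact_mod_cast fun h => hj (Fin.ext (by omega)))]
    ring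
  · simp

lemma poly_natDegree_le (n : ℕ) (w : Fin (n+1) → ℂ) : (poly n w).natDegree ≤ n := by
  refine Polynomial.natDegree_sum_le_of_forall_le _ _ fun i _ => ?_
  calc (C (w i) * X ^ (i:ℕ)).natDegree ≤ (X ^ (i:ℕ) : ℂ[X]).natDegree :=
        Polynomial.natDegree_C_mul_le _ _
    _ ≤ n := by rw [Polynomial.natDegree_X_pow]; omega

lemma poly_ne_zero (n : ℕ) {w : Fin (n+1) → ℂ} (hw : w ≠ 0) : poly n w ≠ 0 := by
  obtain ⟨i, hi⟩ := Function.ne_iff.mp hw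
  intro h
  apply hi
  have := poly_coeff n w i
  rw [h] at this
  simpa using this.symm

lemma poly_smul (n : ℕ) (c : ℂ) (w : Fin (n+1) → ℂ) :
    poly n (c • w) = C c * poly n w := by
  rw [poly, poly, Finset.mul_sum]
  refine Finset.sum_congr rfl fun i _ => ?_
  simp [mul_assoc, map_mul]

lemma poly_coeffFn (n : ℕ) (q : ℂ[X]) (hq : q.natDegree ≤ n) :
    poly n (fun i : Fin (n+1) => q.coeff i) = q := by
  rw [poly, Fin.sum_univ_eq_sum_range (fun i => C (q.coeff i) * X ^ i)]
  simp only [Polynomial.C_mul_X_pow_eq_monomial]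
  exact (Polynomial.as_sum_range' q (n+1) (Nat.lt_succ_of_le hq)).symm

lemma poly_eval (n : ℕ) (w : Fin (n+1) → ℂ) (z : ℂ) :
    (poly n w).eval z = ∑ i : Fin (n+1), w i * z ^ (i : ℕ) := by
  rw [poly, Polynomial.eval_finset_sum]
  simp

lemma poly_eval_continuous (n : ℕ) (z : ℂ) :
    Continuous fun w : Fin (n+1) → ℂ => (poly n w).eval z := by
  simp only [poly_eval]
  exact continuous_finset_sum _ fun i _ => (continuous_apply i).mul continuous_const

lemma pdag_eval_s3 (p : ℂ[X]) (x : ℝ) :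
    (pdag p).eval (Complex.I * x) = starRingEnd ℂ (p.eval (Complex.I * x)) := by
  have h : -(Complex.I * x) = starRingEnd ℂ (Complex.I * x) := by
    simp [Complex.ext_iff]
  rw [pdag, eval_comp, eval_neg, eval_X, eval_map, h, Polynomial.eval₂_at_apply]

lemma eval_mk' {p q : ℂ[X]} {a : ℂ} (hq : q.eval a ≠ 0) :
    RatFunc.eval (RingHom.id ℂ) a (RatFunc.mk p q) = p.eval a / q.eval a := by
  have hq0 : q ≠ 0 := fun h => hq (by simp [h])
  set x := RatFunc.mk p q with hx
  have hdvd : x.denom ∣ q := (RatFunc.denom_dvd hq0).mpr ⟨p, by rw [hx, RatFunc.mk_eq_div]⟩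
  have hde : x.denom.eval a ≠ 0 := by
    obtain ⟨c, hc⟩ := hdvd
    intro h0
    apply hq
    rw [hc, eval_mul, h0, zero_mul]
  have cross : x.num * q = p * x.denom :=
    (RatFunc.num_mul_eq_mul_denom_iff hq0).mpr (by rw [hx, RatFunc.mk_eq_div])
  have cross' : x.num.eval a * q.eval a = p.eval a * x.denom.eval a := by
    rw [← eval_mul, ← eval_mul, cross]
  rw [RatFunc.eval, show eval₂ (RingHom.id ℂ) a x.num = x.num.eval a from rfl,
    show eval₂ (RingHom.id ℂ) a x.denom = x.denom.eval a from rfl,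
    div_eq_div_iff hde hq, ← cross', mul_comm]

lemma ieval_mk {q : ℂ[X]} {x : ℝ} (h : q.eval (Complex.I * x) ≠ 0) (pn : ℂ[X]) :
    ieval (RatFunc.mk pn q) x = pn.eval (Complex.I * x) / q.eval (Complex.I * x) :=
  eval_mk' h

lemma ieval_good {q : ℂ[X]} {x : ℝ} (h : q.eval (Complex.I * x) ≠ 0) :
    ieval (RatFunc.mk (pdag q) q) x
      = starRingEnd ℂ (q.eval (Complex.I * x)) / q.eval (Complex.I * x) := by
  rw [ieval_mk h, pdag_eval_s3]

lemma abs_ieval_good {q : ℂ[X]} {x : ℝ} (h : q.eval (Complex.I * x) ≠ 0) :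
    ‖ieval (RatFunc.mk (pdag q) q) x‖ = 1 := by
  rw [ieval_good h, norm_div, Complex.norm_conj, div_self (by simpa using h)]

lemma abs_cexp (ω x : ℝ) : ‖Complex.exp (Complex.I * ω * x)‖ = 1 := by
  rw [Complex.norm_exp]
  simp [Complex.mul_re]

lemma err_pt_le_two {q : ℂ[X]} (h : ∀ x : ℝ, q.eval (Complex.I * x) ≠ 0) (ω x : ℝ) :
    ‖ieval (RatFunc.mk (pdag q) q) x - Complex.exp (Complex.I * ω * x)‖ ≤ 2 := by
  calc ‖ieval (RatFunc.mk (pdag q) q) x - Complex.exp (Complex.I * ω * x)‖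
      ≤ ‖ieval (RatFunc.mk (pdag q) q) x‖
        + ‖Complex.exp (Complex.I * ω * x)‖ := norm_sub_le _ _
    _ ≤ 2 := by rw [abs_ieval_good (h x), abs_cexp]; norm_num

lemma errNorm_nonneg (ω : ℝ) (u : RatFunc ℂ) : 0 ≤ errNorm ω u := by
  apply Real.sSup_nonneg
  rintro y ⟨x, -, rfl⟩
  positivity

lemma pt_le_errNorm {q : ℂ[X]} (h : ∀ x : ℝ, q.eval (Complex.I * x) ≠ 0) (ω : ℝ)
    {x : ℝ} (hx : x ∈ Set.Icc (-1:ℝ) 1) :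
    ‖ieval (RatFunc.mk (pdag q) q) x - Complex.exp (Complex.I * ω * x)‖
      ≤ errNorm ω (RatFunc.mk (pdag q) q) := by
  apply le_csSup
  · exact ⟨2, by rintro y ⟨t, -, rfl⟩; exact err_pt_le_two h ω t⟩
  · exact ⟨x, hx, rfl⟩

end AuxiliaryLemmas

/-- For every degree `n` and every `ω > 0` there exists a unitary rational
best approximation: some `r ∈ 𝒰_n` with `‖r − exp(ω·)‖ = inf_{u ∈ 𝒰_n} ‖u − exp(ω·)‖`. -/
theorem exists_unitary_best_approximation (n : ℕ) (ω : ℝ) (hω : 0 < ω) :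
    ∃ r ∈ unitaryClass n, (∀ u ∈ unitaryClass n, errNorm ω r ≤ errNorm ω u) ∧
      errNorm ω r = sInf (errNorm ω '' unitaryClass n) := by
  classical
  set S := errNorm ω '' unitaryClass n with hS
  have hSne : S.Nonempty :=
    ⟨errNorm ω (RatFunc.mk (pdag 1) 1), ⟨_, ⟨1, one_ne_zero, by simp, rfl⟩, rfl⟩⟩
  have hSbd : ∀ y ∈ S, (0:ℝ) ≤ y := by rintro y ⟨u, -, rfl⟩; exact errNorm_nonneg ω u
  have hSbdd : BddBelow S := ⟨0, hSbd⟩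
  set E := sInf S with hE
  have hE0 : 0 ≤ E := Real.sInf_nonneg hSbd
  -- minimizing sequence of normalized coefficient vectors with pole-free denominators
  have hseq : ∀ k : ℕ, ∃ w : Fin (n+1) → ℂ, ‖w‖ = 1 ∧
      (∀ x : ℝ, (poly n w).eval (Complex.I * x) ≠ 0) ∧
      errNorm ω (RatFunc.mk (pdag (poly n w)) (poly n w)) < E + 1/(k+1) := by
    intro k
    obtain ⟨y, hyS, hy⟩ := Real.lt_sInf_add_pos hSne (show (0:ℝ) < 1/(k+1) by positivity)
    obtain ⟨u, hu, rfl⟩ := hyS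
    obtain ⟨p, hp0, hpd, rfl⟩ := hu
    obtain ⟨q, hq0, hqd, hqroot, hqmk⟩ := exists_good' p.natDegree p le_rfl hp0
    have hqdn : q.natDegree ≤ n := le_trans hqd hpd
    set w0 : Fin (n+1) → ℂ := fun i => q.coeff i with hw0
    have hpw0 : poly n w0 = q := poly_coeffFn n q hqdn
    have hw0ne : w0 ≠ 0 := by
      intro h
      apply hq0
      rw [← hpw0, h]
      simp [poly]
    have ht : (0:ℝ) < ‖w0‖ := norm_pos_iff.mpr hw0ne
    set c : ℂ := ((‖w0‖ : ℝ) : ℂ)⁻¹ with hc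
    have hc0 : c ≠ 0 := by
      simp only [hc, ne_eq, inv_eq_zero, Complex.ofReal_eq_zero]
      exact ht.ne'
    set w : Fin (n+1) → ℂ := c • w0 with hw
    have hwnorm : ‖w‖ = 1 := by
      rw [hw, norm_smul, hc, norm_inv, Complex.norm_real, Real.norm_eq_abs,
        abs_of_pos ht, inv_mul_cancel₀ ht.ne']
    have hpoly : poly n w = C c * q := by rw [hw, poly_smul, hpw0]
    have hroots : ∀ x : ℝ, (poly n w).eval (Complex.I * x) ≠ 0 := by
      intro x
      rw [hpoly, eval_mul, eval_C]
      exact mul_ne_zero hc0 (hqroot x)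
    have hmk : RatFunc.mk (pdag (poly n w)) (poly n w) = RatFunc.mk (pdag q) q := by
      rw [hpoly, pdag_C_mul']
      have hcc : starRingEnd ℂ c = c := by
        rw [hc, map_inv₀, Complex.conj_ofReal]
      rw [hcc]
      exact mk_mul_cancel' (C c) _ _ (by simpa using hc0)
    refine ⟨w, hwnorm, hroots, ?_⟩
    rw [hmk, ← hqmk]
    exact hy
  choose W hWnorm hWroot hWerr using hseq
  -- extract a convergent subsequence on the unit sphere
  have hWmem : ∀ k, W k ∈ Metric.sphere (0 : Fin (n+1) → ℂ) 1 := fun k =>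
    mem_sphere_zero_iff_norm.mpr (hWnorm k)
  obtain ⟨v, hv, φ, hφ, hconv⟩ :=
    (isCompact_sphere (0 : Fin (n+1) → ℂ) 1).tendsto_subseq hWmem
  have hvnorm : ‖v‖ = 1 := mem_sphere_zero_iff_norm.mp hv
  have hvne : v ≠ 0 := by intro h; rw [h, norm_zero] at hvnorm; norm_num at hvnorm
  set p : ℂ[X] := poly n v with hp
  have hpne : p ≠ 0 := poly_ne_zero n hvne
  have hpdeg : p.natDegree ≤ n := poly_natDegree_le n v
  set r : RatFunc ℂ := RatFunc.mk (pdag p) p with hr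
  have hrmem : r ∈ unitaryClass n := ⟨p, hpne, hpdeg, rfl⟩
  obtain ⟨p', hp'0, hp'd, hp'root, hp'mk⟩ := exists_good' p.natDegree p le_rfl hpne
  have hrieval : ∀ y : ℝ, ieval r y
      = starRingEnd ℂ (p'.eval (Complex.I * y)) / p'.eval (Complex.I * y) := by
    intro y
    rw [hr, hp'mk]
    exact ieval_good (hp'root y)
  -- pointwise bound at points where p does not vanish
  have key1 : ∀ x ∈ Set.Icc (-1:ℝ) 1, p.eval (Complex.I * x) ≠ 0 →
      ‖ieval r x - Complex.exp (Complex.I * ω * x)‖ ≤ E := by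
    intro x hx hpx
    set e : ℂ := Complex.exp (Complex.I * ω * x) with he
    set a : ℕ → ℂ := fun k => (poly n (W (φ k))).eval (Complex.I * x) with ha
    have hatend : Tendsto a atTop (𝓝 (p.eval (Complex.I * x))) := by
      have := ((poly_eval_continuous n (Complex.I * x)).tendsto v).comp hconv
      exact this
    have hconjtend : Tendsto (fun k => starRingEnd ℂ (a k)) atTop
        (𝓝 (starRingEnd ℂ (p.eval (Complex.I * x)))) := by
      exact (Complex.continuous_conj.tendsto _).comp hatend
    have hbtend : Tendsto (fun k => starRingEnd ℂ (a k) / a k) atTop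
        (𝓝 (starRingEnd ℂ (p.eval (Complex.I * x)) / p.eval (Complex.I * x))) :=
      hconjtend.div hatend hpx
    have habs : Tendsto (fun k => ‖starRingEnd ℂ (a k) / a k - e‖) atTop
        (𝓝 (‖starRingEnd ℂ (p.eval (Complex.I * x)) / p.eval (Complex.I * x) - e‖)) :=
      (continuous_norm.tendsto _).comp (hbtend.sub tendsto_const_nhds)
    have hbound : ∀ k : ℕ, ‖starRingEnd ℂ (a k) / a k - e‖ ≤ E + 1/(k+1) := by
      intro k
      have h1 : starRingEnd ℂ (a k) / a k
          = ieval (RatFunc.mk (pdag (poly n (W (φ k)))) (poly n (W (φ k)))) x :=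
        (ieval_good (hWroot (φ k) x)).symm
      have h2 := pt_le_errNorm (hWroot (φ k)) ω hx
      have h3 := hWerr (φ k)
      have hk : (k:ℝ) ≤ φ k := by exact_mod_cast hφ.le_apply
      have h4 : (1:ℝ)/(φ k + 1) ≤ 1/(k+1) := by
        apply one_div_le_one_div_of_le (by positivity)
        linarith
      rw [h1]
      have h5 := h2.trans (le_of_lt h3)
      linarith
    have hrhs : Tendsto (fun k : ℕ => E + 1/((k:ℝ)+1)) atTop (𝓝 (E + 0)) :=
      tendsto_const_nhds.add tendsto_one_div_add_atTop_nhds_zero_nat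
    have hlim := le_of_tendsto_of_tendsto' habs hrhs hbound
    rw [add_zero] at hlim
    have : ieval r x = starRingEnd ℂ (p.eval (Complex.I * x)) / p.eval (Complex.I * x) := by
      rw [hr]
      exact ieval_good hpx
    rw [this]
    exact hlim
  -- extend the bound to all of [-1,1] by continuity
  have key2 : ∀ x ∈ Set.Icc (-1:ℝ) 1,
      ‖ieval r x - Complex.exp (Complex.I * ω * x)‖ ≤ E := by
    intro x hx
    by_contra hgt
    push_neg at hgt
    set F : ℝ → ℝ := fun y => ‖ieval r y - Complex.exp (Complex.I * ω * y)‖ with hF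
    have hFcont : Continuous F := by
      have hFeq : F = fun y : ℝ => ‖starRingEnd ℂ (p'.eval (Complex.I * (y:ℂ))) / p'.eval (Complex.I * (y:ℂ))
            - Complex.exp (Complex.I * ω * (y:ℂ))‖ := by
        funext y
        show ‖ieval r y - Complex.exp (Complex.I * ω * (y:ℂ))‖
          = ‖starRingEnd ℂ (p'.eval (Complex.I * (y:ℂ))) / p'.eval (Complex.I * (y:ℂ))
            - Complex.exp (Complex.I * ω * (y:ℂ))‖
        rw [hrieval y]
      rw [hFeq]
      have hc1 : Continuous fun y : ℝ => p'.eval (Complex.I * y) :=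
        p'.continuous.comp (continuous_const.mul Complex.continuous_ofReal)
      have hc2 : Continuous fun y : ℝ => starRingEnd ℂ (p'.eval (Complex.I * y)) :=
        Complex.continuous_conj.comp hc1
      have hc3 : Continuous fun y : ℝ => Complex.exp (Complex.I * ω * y) :=
        Complex.continuous_exp.comp ((continuous_const.mul continuous_const).mul
          Complex.continuous_ofReal)
      exact continuous_norm.comp ((hc2.div hc1 fun y => hp'root y).sub hc3)
    have hopen : IsOpen {y : ℝ | E < F y} := isOpen_lt continuous_const hFcont
    obtain ⟨δ, hδ, hball⟩ := Metric.isOpen_iff.mp hopen x hgt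
    -- the set of roots of p on the imaginary axis is finite
    have hbadfin : Set.Finite {y : ℝ | p.eval (Complex.I * y) = 0} := by
      have hinj : Function.Injective fun y : ℝ => Complex.I * (y : ℂ) := by
        intro s t hst
        simpa [Complex.ext_iff, Complex.I_ne_zero] using
          mul_left_cancel₀ Complex.I_ne_zero hst
      have hroots : Set.Finite {z : ℂ | p.IsRoot z} := by
        refine Set.Finite.subset p.roots.toFinset.finite_toSet fun z hz => ?_
        simp only [Multiset.mem_toFinset, Finset.coe_sort_coe, Multiset.mem_coe,
          Polynomial.mem_roots, hpne, ne_eq, not_false_eq_true, true_and, Finset.mem_coe]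
        exact hz
      exact (hroots.preimage (hinj.injOn)).subset fun y hy => hy
    -- find a nearby point where p does not vanish
    have hab : max (-1 : ℝ) (x - δ) < min (1:ℝ) (x + δ) := by
      rcases hx with ⟨hx1, hx2⟩
      apply max_lt <;> apply lt_min <;> linarith
    have hinf : (Set.Ioo (max (-1:ℝ) (x - δ)) (min (1:ℝ) (x + δ))).Infinite :=
      Set.Ioo_infinite hab
    obtain ⟨y, hyIoo, hygood⟩ := (hinf.diff hbadfin).nonempty
    rcases hyIoo with ⟨hy1, hy2⟩
    have hyIcc : y ∈ Set.Icc (-1:ℝ) 1 :=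
      ⟨le_of_lt (lt_of_le_of_lt (le_max_left _ _) hy1),
       le_of_lt (lt_of_lt_of_le hy2 (min_le_left _ _))⟩
    have hydist : dist y x < δ := by
      rw [Real.dist_eq, abs_lt]
      constructor
      · have := lt_of_le_of_lt (le_max_right (-1:ℝ) (x - δ)) hy1
        linarith
      · have := lt_of_lt_of_le hy2 (min_le_right (1:ℝ) (x + δ))
        linarith
    have hyF : E < F y := hball hydist
    have hyE : F y ≤ E := key1 y hyIcc (by simpa using hygood)
    linarith
  -- conclude
  have hErrLe : errNorm ω r ≤ E := by
    apply Real.sSup_le _ hE0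
    rintro y ⟨x, hx, rfl⟩
    exact key2 x hx
  have hge : E ≤ errNorm ω r := csInf_le hSbdd ⟨r, hrmem, rfl⟩
  refine ⟨r, hrmem, fun u hu => hErrLe.trans (csInf_le hSbdd ⟨u, hu, rfl⟩),
    le_antisymm hErrLe hge⟩
end

section
/- Let n ∈ ℕ and ω > 0. (iii) Let r_1, r_2 ∈ 𝒰_n have phase functions g_1, g_2 satisfying max_{x ∈ [−1,1]} |g_k(x) − ωx| < π for k = 1, 2 (equivalently, ‖r_k − exp(ω·)‖ < 2). Then ‖r_2 − exp(ω·)‖ < ‖r_1 − exp(ω·)‖ if and only if max_{x ∈ [−1,1]} |g_2(x) − ωx| < max_{x ∈ [−1,1]} |g_1(x) − ωx|. (iv) If r ∈ 𝒰_n has phase function g with max_{x ∈ [−1,1]} |g(x) − ωx| < π, then a point y ∈ [−1,1] satisfies |r(iy) − e^{iωy}| = ‖r − exp(ω·)‖ if and only if |g(y) − ωy| = max_{x ∈ [−1,1]} |g(x) − ωx|. -/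
open Polynomial

lemma abs_exp_sub_exp (a b : ℝ) :
    ‖Complex.exp (Complex.I * a) - Complex.exp (Complex.I * b)‖
      = 2 * |Real.sin ((a - b) / 2)| := by
  have e1 : Complex.I * (a : ℂ) = Complex.I * (((a + b) / 2 : ℝ) : ℂ) + Complex.I * (((a - b) / 2 : ℝ) : ℂ) := by
    push_cast; ring
  have e2 : Complex.I * (b : ℂ) = Complex.I * (((a + b) / 2 : ℝ) : ℂ) + Complex.I * ((-((a - b) / 2) : ℝ) : ℂ) := by
    push_cast; ring
  rw [e1, e2, Complex.exp_add, Complex.exp_add, ← mul_sub, norm_mul]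
  have h1 : ‖Complex.exp (Complex.I * (((a + b) / 2 : ℝ) : ℂ))‖ = 1 := by
    rw [mul_comm]; exact Complex.norm_exp_ofReal_mul_I _
  rw [h1, one_mul]
  have h2 : Complex.exp (Complex.I * (((a - b) / 2 : ℝ) : ℂ))
      - Complex.exp (Complex.I * ((-((a - b) / 2) : ℝ) : ℂ))
      = 2 * Complex.I * Complex.sin (((a - b) / 2 : ℝ) : ℂ) := by
    rw [Complex.sin]
    push_cast
    ring_nf
    simp [Complex.I_sq]
    ring
  rw [h2]
  rw [norm_mul, norm_mul, Complex.norm_I, Complex.norm_two, ← Complex.ofReal_sin, Complex.norm_real, Real.norm_eq_abs]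
  ring

lemma abs_sin_eq {u : ℝ} (h : |u| ≤ Real.pi) : |Real.sin u| = Real.sin |u| := by
  rcases le_or_gt 0 u with hu | hu
  · rw [abs_of_nonneg hu, abs_of_nonneg]
    exact Real.sin_nonneg_of_nonneg_of_le_pi hu (by rwa [abs_of_nonneg hu] at h)
  · have hp : -Real.pi ≤ u := by
      rw [abs_of_neg hu] at h; linarith
    have hs : Real.sin u ≤ 0 := Real.sin_nonpos_of_nonpos_of_neg_pi_le (le_of_lt hu) hp
    rw [abs_of_neg hu, Real.sin_neg, abs_of_nonpos hs]

lemma greatest_phase (ω : ℝ) (g : ℝ → ℝ) (hc : Continuous g) :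
    IsGreatest ((fun x : ℝ => |g x - ω * x|) '' Set.Icc (-1 : ℝ) 1) (phaseErrSup ω g) := by
  have hcE : Continuous fun x : ℝ => |g x - ω * x| := (hc.sub (continuous_const.mul continuous_id)).abs
  have hK : IsCompact ((fun x : ℝ => |g x - ω * x|) '' Set.Icc (-1 : ℝ) 1) :=
    isCompact_Icc.image hcE
  have hne : ((fun x : ℝ => |g x - ω * x|) '' Set.Icc (-1 : ℝ) 1).Nonempty :=
    ⟨_, ⟨0, by norm_num, rfl⟩⟩
  exact ⟨hK.sSup_mem hne, fun y hy => le_csSup hK.bddAbove hy⟩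

lemma phaseErrSup_mem_half (ω : ℝ) {g : ℝ → ℝ} (hc : Continuous g)
    (hb : phaseErrSup ω g < Real.pi) :
    phaseErrSup ω g / 2 ∈ Set.Icc (-(Real.pi / 2)) (Real.pi / 2) := by
  have hG := greatest_phase ω g hc
  have h0 : 0 ≤ phaseErrSup ω g :=
    le_trans (abs_nonneg _) (hG.2 ⟨0, by norm_num, rfl⟩)
  constructor <;> [linarith [Real.pi_pos]; linarith]

lemma errNorm_facts (ω : ℝ) (r : RatFunc ℂ) (g : ℝ → ℝ) (hc : Continuous g)
    (hr : ∀ x : ℝ, ieval r x = Complex.exp (Complex.I * g x))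
    (hb : phaseErrSup ω g < Real.pi) :
    errNorm ω r = 2 * Real.sin (phaseErrSup ω g / 2) ∧
    (∀ y ∈ Set.Icc (-1 : ℝ) 1,
      ‖ieval r y - Complex.exp (Complex.I * ω * y)‖
        = 2 * Real.sin (|g y - ω * y| / 2)) := by
  have hG := greatest_phase ω g hc
  have h0 : 0 ≤ phaseErrSup ω g :=
    le_trans (abs_nonneg _) (hG.2 ⟨0, by norm_num, rfl⟩)
  have key : ∀ y ∈ Set.Icc (-1 : ℝ) 1,
      ‖ieval r y - Complex.exp (Complex.I * ω * y)‖
        = 2 * Real.sin (|g y - ω * y| / 2) := by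
    intro y hy
    have hley : |g y - ω * y| ≤ phaseErrSup ω g := hG.2 ⟨y, hy, rfl⟩
    have harg : Complex.I * (ω : ℂ) * (y : ℂ) = Complex.I * ((ω * y : ℝ) : ℂ) := by
      push_cast; ring
    rw [hr y, harg, abs_exp_sub_exp (g y) (ω * y)]
    have hsmall : |(g y - ω * y) / 2| ≤ Real.pi := by
      rw [abs_div, abs_two]
      nlinarith [Real.pi_pos]
    rw [abs_sin_eq hsmall, abs_div, abs_two]
  refine ⟨?_, key⟩
  have hIG : IsGreatest
      ((fun x : ℝ => ‖ieval r x - Complex.exp (Complex.I * ω * x)‖) ''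
        Set.Icc (-1 : ℝ) 1) (2 * Real.sin (phaseErrSup ω g / 2)) := by
    constructor
    · obtain ⟨x₀, hx₀, hEx₀⟩ := hG.1
      exact ⟨x₀, hx₀, by beta_reduce; rw [key x₀ hx₀]; simp only at hEx₀; rw [hEx₀]⟩
    · rintro z ⟨x, hx, rfl⟩
      beta_reduce
      rw [key x hx]
      have hley : |g x - ω * x| ≤ phaseErrSup ω g := hG.2 ⟨x, hx, rfl⟩
      have m1 : |g x - ω * x| / 2 ∈ Set.Icc (-(Real.pi / 2)) (Real.pi / 2) := by
        constructor
        · have := abs_nonneg (g x - ω * x); have := Real.pi_pos; linarith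
        · linarith
      have m2 := phaseErrSup_mem_half ω hc hb
      have := Real.strictMonoOn_sin.monotoneOn m1 m2 (by linarith)
      linarith
  rw [errNorm, hIG.csSup_eq]

lemma phaseFun_continuous {n : ℕ} {r : RatFunc ℂ} {g : ℝ → ℝ} (h : IsPhaseFun n r g) :
    Continuous g ∧ ∀ x : ℝ, ieval r x = Complex.exp (Complex.I * g x) := by
  obtain ⟨m, θ, μ, ξ, -, -, -, hgf, hgr⟩ := h
  refine ⟨?_, hgr⟩
  have : g = fun x => θ + 2 * ∑ j, Real.arctan ((x - μ j) / ξ j) := funext hgf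
  rw [this]
  continuity

/-- (iii) For `r₁, r₂ ∈ 𝒰_n` with phase functions `g₁, g₂` whose phase errors
are bounded by `π` on `[−1,1]`, one has `‖r₂ − exp(ω·)‖ < ‖r₁ − exp(ω·)‖` iff
`max |g₂ − ωx| < max |g₁ − ωx|`. (iv) For such `r₁` with phase function `g₁`, a point
`y ∈ [−1,1]` attains the maximal approximation error iff it attains the maximal phase
error. -/
theorem phase_error_vs_approx_error (n : ℕ) (ω : ℝ) (hω : 0 < ω)
    (r₁ r₂ : RatFunc ℂ) (h₁ : r₁ ∈ unitaryClass n) (h₂ : r₂ ∈ unitaryClass n)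
    (g₁ g₂ : ℝ → ℝ) (hg₁ : IsPhaseFun n r₁ g₁) (hg₂ : IsPhaseFun n r₂ g₂)
    (hb₁ : phaseErrSup ω g₁ < Real.pi) (hb₂ : phaseErrSup ω g₂ < Real.pi) :
    (errNorm ω r₂ < errNorm ω r₁ ↔ phaseErrSup ω g₂ < phaseErrSup ω g₁) ∧
    (∀ y ∈ Set.Icc (-1 : ℝ) 1,
      (‖ieval r₁ y - Complex.exp (Complex.I * ω * y)‖ = errNorm ω r₁ ↔
        |g₁ y - ω * y| = phaseErrSup ω g₁)) := by
  obtain ⟨hc₁, hr₁⟩ := phaseFun_continuous hg₁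
  obtain ⟨hc₂, hr₂⟩ := phaseFun_continuous hg₂
  obtain ⟨hE₁, hpt₁⟩ := errNorm_facts ω r₁ g₁ hc₁ hr₁ hb₁
  obtain ⟨hE₂, hpt₂⟩ := errNorm_facts ω r₂ g₂ hc₂ hr₂ hb₂
  have m1 := phaseErrSup_mem_half ω hc₁ hb₁
  have m2 := phaseErrSup_mem_half ω hc₂ hb₂
  constructor
  · rw [hE₁, hE₂]
    constructor
    · intro h
      have hs : Real.sin (phaseErrSup ω g₂ / 2) < Real.sin (phaseErrSup ω g₁ / 2) := by linarith
      have := (Real.strictMonoOn_sin.lt_iff_lt m2 m1).1 hs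
      linarith
    · intro h
      have := Real.strictMonoOn_sin m2 m1 (by linarith)
      linarith
  · intro y hy
    rw [hpt₁ y hy, hE₁]
    have hG := greatest_phase ω g₁ hc₁
    have hley : |g₁ y - ω * y| ≤ phaseErrSup ω g₁ := hG.2 ⟨y, hy, rfl⟩
    have my : |g₁ y - ω * y| / 2 ∈ Set.Icc (-(Real.pi / 2)) (Real.pi / 2) := by
      constructor
      · have := abs_nonneg (g₁ y - ω * y); have := Real.pi_pos; linarith
      · linarith
    constructor
    · intro h
      have hs : Real.sin (|g₁ y - ω * y| / 2) = Real.sin (phaseErrSup ω g₁ / 2) := by linarith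
      have := Real.strictMonoOn_sin.injOn my m1 hs
      linarith
    · intro h
      rw [h]
end

section
/- Let r_1, r_2 ∈ 𝒰_n have minimal degrees n_1 and n_2 respectively, and let g_1, g_2 be phase functions with r_1(ix) = e^{i g_1(x)} and r_2(ix) = e^{i g_2(x)} for all x ∈ ℝ. If g_1 − g_2 has at least n_1 + n_2 + 1 zeros counting multiplicity — i.e. there exist distinct points y_1,…,y_ℓ ∈ ℝ and multiplicities k_1,…,k_ℓ ≥ 1 with k_1 + ⋯ + k_ℓ ≥ n_1 + n_2 + 1 such that the d-th derivative of g_1 − g_2 vanishes at y_i for every 0 ≤ d < k_i and every i — then r_1 = r_2. -/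
open Polynomial

open scoped ContDiff
open Complex

namespace PDZ

lemma coe_le_inf (d : ℕ) : ((d : ℕ∞) : WithTop ℕ∞) ≤ ∞ := by exact_mod_cast le_top

lemma contDiff_polyval (Q : Polynomial ℂ) : ContDiff ℝ ∞ (fun t : ℝ => Q.eval (t : ℂ)) := by
  induction Q using Polynomial.induction_on with
  | C a => simpa using (contDiff_const : ContDiff ℝ ∞ fun _ : ℝ => a)
  | add p q hp hq => simpa [Polynomial.eval_add] using hp.add hq
  | monomial m a ih =>
      have : ContDiff ℝ ∞ (fun t : ℝ => a * (t : ℂ) ^ (m + 1)) :=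
        contDiff_const.mul ((Complex.ofRealCLM.contDiff).pow (m + 1))
      simpa [Polynomial.eval_mul, Polynomial.eval_pow] using this

lemma itd_add {f g : ℝ → ℂ} (hf : ContDiff ℝ ∞ f) (hg : ContDiff ℝ ∞ g) (d : ℕ) (y : ℝ) :
    iteratedDeriv d (fun x => f x + g x) y = iteratedDeriv d f y + iteratedDeriv d g y := by
  have h := iteratedFDeriv_add_apply (𝕜 := ℝ) (i := d) (f := f) (g := g)
      (hf.contDiffAt.of_le (by exact_mod_cast le_top)) (hg.contDiffAt.of_le (by exact_mod_cast le_top)) (x := y)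
  have e : (fun x => f x + g x) = f + g := rfl
  rw [e, iteratedDeriv_eq_iteratedFDeriv, iteratedDeriv_eq_iteratedFDeriv,
    iteratedDeriv_eq_iteratedFDeriv, h]
  rfl

lemma itd_cmul {f : ℝ → ℂ} (hf : ContDiff ℝ ∞ f) (c : ℂ) (d : ℕ) (y : ℝ) :
    iteratedDeriv d (fun x => c * f x) y = c * iteratedDeriv d f y := by
  have h := iteratedFDeriv_const_smul_apply (𝕜 := ℝ) (i := d) (f := f) (a := c)
      (hf.contDiffAt.of_le (by exact_mod_cast le_top)) (x := y)
  have e : (fun x => c * f x) = c • f := rfl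
  rw [e, iteratedDeriv_eq_iteratedFDeriv, iteratedDeriv_eq_iteratedFDeriv, h]
  rfl

lemma itd_mul_vanish (y : ℝ) :
    ∀ (d : ℕ) (f g : ℝ → ℂ), ContDiff ℝ ∞ f → ContDiff ℝ ∞ g →
      (∀ j, j ≤ d → iteratedDeriv j f y = 0) →
      iteratedDeriv d (fun x => f x * g x) y = 0 := by
  intro d
  induction d with
  | zero =>
      intro f g _ _ hv
      simp only [iteratedDeriv_zero]
      rw [show f y = iteratedDeriv 0 f y from rfl, hv 0 le_rfl, zero_mul]
  | succ d ih =>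
      intro f g hf hg hv
      have hf' : ContDiff ℝ ∞ (deriv f) := (contDiff_infty_iff_deriv.mp hf).2
      have hg' : ContDiff ℝ ∞ (deriv g) := (contDiff_infty_iff_deriv.mp hg).2
      have hdf : deriv (fun x => f x * g x)
          = fun x => deriv f x * g x + f x * deriv g x := by
        funext x
        exact deriv_fun_mul ((hf.differentiable (by simp)) x)
          ((hg.differentiable (by simp)) x)
      rw [iteratedDeriv_succ', hdf,
        itd_add (hf'.mul hg) (hf.mul hg') d y,
        ih (deriv f) g hf' hg (fun j hj => by
          rw [← iteratedDeriv_succ']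
          exact hv (j + 1) (Nat.succ_le_succ hj)),
        ih f (deriv g) hf hg' (fun j hj => hv j (hj.trans (Nat.le_succ d))),
        add_zero]

lemma itd_exp_vanish (h : ℝ → ℂ) (hh : ContDiff ℝ ∞ h) (y : ℝ) (K : ℕ)
    (hv : ∀ d, d < K → iteratedDeriv d h y = 0) :
    ∀ d, d < K → iteratedDeriv d (fun x => Complex.exp (h x) - 1) y = 0 := by
  intro d
  induction d using Nat.strong_induction_on with
  | _ d ih =>
    intro hdK
    match d, hdK with
    | 0, hdK =>
        simp only [iteratedDeriv_zero]
        have h0 : h y = 0 := by simpa using hv 0 hdK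
        rw [h0, Complex.exp_zero, sub_self]
    | (e+1), hdK =>
        have hh' : ContDiff ℝ ∞ (deriv h) := (contDiff_infty_iff_deriv.mp hh).2
        have hvsm : ContDiff ℝ ∞ (fun x => Complex.exp (h x) - 1) :=
          (Complex.contDiff_exp.comp hh).sub contDiff_const
        have hder : deriv (fun x => Complex.exp (h x) - 1)
            = fun x => (Complex.exp (h x) - 1) * deriv h x + deriv h x := by
          funext x
          have Hx : HasDerivAt (fun x => Complex.exp (h x) - 1)
              (Complex.exp (h x) * deriv h x) x :=
            (((hh.differentiable (by simp)) x).hasDerivAt.cexp).sub_const 1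
          rw [Hx.deriv]; ring
        rw [iteratedDeriv_succ', hder,
          itd_add (hvsm.mul hh') hh' e y,
          itd_mul_vanish y e _ (deriv h) hvsm hh'
            (fun j hj => ih j (Nat.lt_succ_of_le hj)
              (lt_trans (Nat.lt_succ_of_le hj) hdK)),
          ← iteratedDeriv_succ', hv (e+1) hdK, add_zero]

lemma itd_ofReal (y : ℝ) :
    ∀ (d : ℕ) (u : ℝ → ℝ), ContDiff ℝ ∞ u →
      iteratedDeriv d (fun x => ((u x : ℝ) : ℂ)) y = ((iteratedDeriv d u y : ℝ) : ℂ) := by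
  intro d
  induction d with
  | zero => intro u hu; simp
  | succ d ih =>
      intro u hu
      have hu' : ContDiff ℝ ∞ (deriv u) := (contDiff_infty_iff_deriv.mp hu).2
      have hder : deriv (fun x => ((u x : ℝ) : ℂ)) = fun x => ((deriv u x : ℝ) : ℂ) := by
        funext x
        exact (((hu.differentiable (by simp)) x).hasDerivAt.ofReal_comp).deriv
      rw [iteratedDeriv_succ', hder, ih (deriv u) hu', ← iteratedDeriv_succ']

lemma itd_poly (y : ℝ) :
    ∀ (d : ℕ) (Q : Polynomial ℂ),
      iteratedDeriv d (fun t : ℝ => Q.eval (t : ℂ)) y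
        = (Polynomial.derivative^[d] Q).eval (y : ℂ) := by
  intro d
  induction d with
  | zero => intro Q; simp
  | succ d ih =>
      intro Q
      have hder : deriv (fun t : ℝ => Q.eval (t : ℂ))
          = fun t : ℝ => (Polynomial.derivative Q).eval (t : ℂ) := by
        funext t
        exact ((Q.hasDerivAt (t : ℂ)).comp_ofReal).deriv
      rw [iteratedDeriv_succ', hder, ih (Polynomial.derivative Q),
        Function.iterate_succ_apply]

lemma ieval_mk {p q : Polynomial ℂ} (hq : q ≠ 0) {z : ℂ} (hz : q.eval z ≠ 0) :
    RatFunc.eval (RingHom.id ℂ) z (RatFunc.mk p q) = p.eval z / q.eval z := by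
  set r := RatFunc.mk p q with hr
  have hmk : r = algebraMap (Polynomial ℂ) (RatFunc ℂ) p / algebraMap _ _ q :=
    RatFunc.mk_eq_div p q
  have hdd : r.denom ∣ q := (RatFunc.denom_dvd hq).mpr ⟨p, hmk⟩
  have hde : r.denom.eval z ≠ 0 := by
    obtain ⟨c, hc⟩ := hdd
    intro h0
    exact hz (by rw [hc, Polynomial.eval_mul, h0, zero_mul])
  have h1 : algebraMap (Polynomial ℂ) (RatFunc ℂ) r.num / algebraMap _ _ r.denom
      = algebraMap (Polynomial ℂ) (RatFunc ℂ) p / algebraMap _ _ q := by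
    rw [RatFunc.num_div_denom]; exact hmk
  rw [div_eq_div_iff (RatFunc.algebraMap_ne_zero r.denom_ne_zero)
    (RatFunc.algebraMap_ne_zero hq), ← map_mul, ← map_mul] at h1
  have hcross : r.num * q = p * r.denom :=
    IsFractionRing.injective (Polynomial ℂ) (RatFunc ℂ) h1
  have hev := congrArg (Polynomial.eval z) hcross
  rw [Polynomial.eval_mul, Polynomial.eval_mul] at hev
  have heq : RatFunc.eval (RingHom.id ℂ) z r = r.num.eval z / r.denom.eval z := by
    rw [RatFunc.eval, Polynomial.eval₂_eq_eval_map, Polynomial.eval₂_eq_eval_map,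
      Polynomial.map_id, Polynomial.map_id]
  rw [heq]
  field_simp
  linear_combination hev

lemma contDiff_phase {m : ℕ} (θ : ℝ) (μ ξ : Fin m → ℝ) (g : ℝ → ℝ)
    (hg : ∀ x, g x = θ + 2 * ∑ j, Real.arctan ((x - μ j) / ξ j)) :
    ContDiff ℝ ∞ g := by
  have hfun : g = fun x => θ + 2 * ∑ j, Real.arctan ((x - μ j) / ξ j) := funext hg
  rw [hfun]
  exact contDiff_const.add (contDiff_const.mul (ContDiff.sum fun j _ =>
    ContDiff.arctan ((contDiff_id.sub contDiff_const).div_const _)))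

lemma diff_vanish (g₁ g₂ : ℝ → ℝ) (h1 : ContDiff ℝ ∞ g₁) (h2 : ContDiff ℝ ∞ g₂)
    (y₀ : ℝ) (K : ℕ)
    (hv : ∀ d, d < K → iteratedDeriv d (fun t => g₁ t - g₂ t) y₀ = 0) :
    ∀ d, d < K → iteratedDeriv d
      (fun x => Complex.exp (Complex.I * (g₁ x : ℂ)) -
        Complex.exp (Complex.I * (g₂ x : ℂ))) y₀ = 0 := by
  have h12 : ContDiff ℝ ∞ fun t => g₁ t - g₂ t := h1.sub h2
  have hof : ContDiff ℝ ∞ fun x => ((g₁ x - g₂ x : ℝ) : ℂ) :=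
    Complex.ofRealCLM.contDiff.comp h12
  set h : ℝ → ℂ := fun x => Complex.I * ((g₁ x - g₂ x : ℝ) : ℂ) with hh
  have hsm : ContDiff ℝ ∞ h := contDiff_const.mul hof
  have hvh : ∀ d, d < K → iteratedDeriv d h y₀ = 0 := by
    intro d hd
    rw [hh, itd_cmul hof Complex.I d y₀, itd_ofReal y₀ d _ h12, hv d hd]
    simp
  have hvsm : ContDiff ℝ ∞ (fun x => Complex.exp (h x) - 1) :=
    (Complex.contDiff_exp.comp hsm).sub contDiff_const
  have hesm : ContDiff ℝ ∞ (fun x => Complex.exp (Complex.I * (g₂ x : ℂ))) :=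
    Complex.contDiff_exp.comp (contDiff_const.mul (Complex.ofRealCLM.contDiff.comp h2))
  have hu : (fun x => Complex.exp (Complex.I * (g₁ x : ℂ)) -
        Complex.exp (Complex.I * (g₂ x : ℂ)))
      = fun x => (Complex.exp (h x) - 1) * Complex.exp (Complex.I * (g₂ x : ℂ)) := by
    funext x
    rw [sub_mul, one_mul, ← Complex.exp_add]
    have : h x + Complex.I * (g₂ x : ℂ) = Complex.I * (g₁ x : ℂ) := by
      rw [hh]; push_cast; ring
    rw [this]
  intro d hd
  rw [hu]
  exact itd_mul_vanish y₀ d _ _ hvsm hesm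
    (fun j hj => itd_exp_vanish h hsm y₀ K hvh j (lt_of_le_of_lt hj hd))

lemma card_finsum {ι : Type*} (s : Finset ι) (f : ι → Multiset ℂ) :
    Multiset.card (∑ i ∈ s, f i) = ∑ i ∈ s, Multiset.card (f i) := by
  classical
  induction s using Finset.induction_on with
  | empty => simp
  | insert a s' hnot ih => simp [Finset.sum_insert hnot, ih]
end PDZ

open PDZ in
/-- If `r₁, r₂ ∈ 𝒰_n` have minimal degrees `n₁, n₂` and phase functions
`g₁, g₂`, and `g₁ − g₂` has at least `n₁ + n₂ + 1` zeros counting multiplicity, then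
`r₁ = r₂`. -/
theorem phase_difference_zeros_imply_eq (n n₁ n₂ : ℕ) (r₁ r₂ : RatFunc ℂ)
    (h₁ : r₁ ∈ unitaryClass n₁) (h₁min : ∀ m : ℕ, r₁ ∈ unitaryClass m → n₁ ≤ m)
    (h₂ : r₂ ∈ unitaryClass n₂) (h₂min : ∀ m : ℕ, r₂ ∈ unitaryClass m → n₂ ≤ m)
    (hn₁ : n₁ ≤ n) (hn₂ : n₂ ≤ n)
    (g₁ g₂ : ℝ → ℝ) (hg₁ : IsPhaseFun n r₁ g₁) (hg₂ : IsPhaseFun n r₂ g₂)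
    (l : ℕ) (y : Fin l → ℝ) (k : Fin l → ℕ)
    (hy : Function.Injective y) (hk : ∀ i, 1 ≤ k i)
    (hsum : n₁ + n₂ + 1 ≤ ∑ i, k i)
    (hzero : ∀ i : Fin l, ∀ d : ℕ, d < k i →
      iteratedDeriv d (fun t => g₁ t - g₂ t) (y i) = 0) :
    r₁ = r₂ := by
  classical
  obtain ⟨p₁, hp₁0, hp₁d, hr₁⟩ := h₁
  obtain ⟨p₂, hp₂0, hp₂d, hr₂⟩ := h₂
  obtain ⟨m₁, θ₁, μ₁, ξ₁, -, -, -, hform₁, hphase₁⟩ := hg₁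
  obtain ⟨m₂, θ₂, μ₂, ξ₂, -, -, -, hform₂, hphase₂⟩ := hg₂
  have hs₁ : ContDiff ℝ ∞ g₁ := contDiff_phase θ₁ μ₁ ξ₁ g₁ hform₁
  have hs₂ : ContDiff ℝ ∞ g₂ := contDiff_phase θ₂ μ₂ ξ₂ g₂ hform₂
  set u : ℝ → ℂ := fun x => Complex.exp (Complex.I * (g₁ x : ℂ)) -
      Complex.exp (Complex.I * (g₂ x : ℂ)) with hu
  have hD : ∀ x : ℝ, ieval r₁ x - ieval r₂ x = u x := by
    intro x; rw [hphase₁ x, hphase₂ x]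
  have husm : ContDiff ℝ ∞ u := by
    apply ContDiff.sub <;>
      exact Complex.contDiff_exp.comp
        (contDiff_const.mul (Complex.ofRealCLM.contDiff.comp (by first | exact hs₁ | exact hs₂)))
  set P : Polynomial ℂ := pdag p₁ * p₂ - pdag p₂ * p₁ with hP
  set A : Polynomial ℂ := Polynomial.C Complex.I * Polynomial.X with hA
  set Qc : Polynomial ℂ := P.comp A with hQc
  set Bc : Polynomial ℂ := (p₁ * p₂).comp A with hBc
  have hAev : ∀ x : ℝ, A.eval (x : ℂ) = Complex.I * (x : ℂ) := by
    intro x; rw [hA]; simp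
  -- the bad set is finite
  have hinj : Function.Injective fun x : ℝ => Complex.I * (x : ℂ) := by
    intro a b hab
    have := mul_left_cancel₀ Complex.I_ne_zero hab
    exact_mod_cast this
  have hfinT : Set.Finite {x : ℝ | (p₁ * p₂).eval (Complex.I * (x : ℂ)) = 0} := by
    have hroots : Set.Finite {z : ℂ | (p₁ * p₂).IsRoot z} :=
      Polynomial.finite_setOf_isRoot (mul_ne_zero hp₁0 hp₂0)
    exact Set.Finite.preimage (Set.injOn_of_injective hinj) hroots
  have hdense : Dense {x : ℝ | (p₁ * p₂).eval (Complex.I * (x : ℂ)) = 0}ᶜ :=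
    Set.Countable.dense_compl ℝ hfinT.countable
  -- the key identity
  have hkey : (fun x : ℝ => Qc.eval (x : ℂ)) = fun x : ℝ => u x * Bc.eval (x : ℂ) := by
    apply Continuous.ext_on hdense (contDiff_polyval Qc).continuous
      (husm.continuous.mul (contDiff_polyval Bc).continuous)
    intro x hx
    have hx' : (p₁ * p₂).eval (Complex.I * (x : ℂ)) ≠ 0 := hx
    rw [Polynomial.eval_mul] at hx'
    have hx1 : p₁.eval (Complex.I * (x : ℂ)) ≠ 0 := fun h => hx' (by rw [h, zero_mul])
    have hx2 : p₂.eval (Complex.I * (x : ℂ)) ≠ 0 := fun h => hx' (by rw [h, mul_zero])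
    have hev₁ : ieval r₁ x = (pdag p₁).eval (Complex.I * (x : ℂ)) /
        p₁.eval (Complex.I * (x : ℂ)) := by
      rw [ieval, hr₁]; exact ieval_mk hp₁0 hx1
    have hev₂ : ieval r₂ x = (pdag p₂).eval (Complex.I * (x : ℂ)) /
        p₂.eval (Complex.I * (x : ℂ)) := by
      rw [ieval, hr₂]; exact ieval_mk hp₂0 hx2
    have hux : u x = ieval r₁ x - ieval r₂ x := (hD x).symm
    show Qc.eval (x : ℂ) = u x * Bc.eval (x : ℂ)
    rw [hQc, hBc, Polynomial.eval_comp, Polynomial.eval_comp, hAev, hP,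
      hux, hev₁, hev₂]
    rw [Polynomial.eval_sub, Polynomial.eval_mul, Polynomial.eval_mul,
      Polynomial.eval_mul]
    field_simp
  -- vanishing of iterated derivatives of Qc at the y i
  have hud : ∀ i : Fin l, ∀ d, d < k i → iteratedDeriv d u (y i) = 0 := by
    intro i
    exact diff_vanish g₁ g₂ hs₁ hs₂ (y i) (k i) (hzero i)
  have hQv : ∀ i : Fin l, ∀ d, d < k i →
      (Polynomial.derivative^[d] Qc).IsRoot ((y i : ℝ) : ℂ) := by
    intro i d hd
    have h1 : iteratedDeriv d (fun t : ℝ => Qc.eval (t : ℂ)) (y i) = 0 := by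
      rw [hkey]
      exact itd_mul_vanish (y i) d u _ husm (contDiff_polyval Bc)
        (fun j hj => hud i j (lt_of_le_of_lt hj hd))
    have h2 := itd_poly (y i) d Qc
    rw [h1] at h2
    exact h2.symm
  -- P must vanish
  have hP0 : P = 0 := by
    by_contra hPne
    have hQcne : Qc ≠ 0 := by
      intro hq
      apply hPne
      have hcomp : Qc.comp (Polynomial.C (-Complex.I) * Polynomial.X) = P := by
        rw [hQc, Polynomial.comp_assoc]
        have hAX : A.comp (Polynomial.C (-Complex.I) * Polynomial.X) = Polynomial.X := by
          rw [hA]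
          simp only [Polynomial.mul_comp, Polynomial.C_comp, Polynomial.X_comp,
            ← mul_assoc, ← Polynomial.C_mul]
          norm_num [Complex.I_mul_I]
        rw [hAX, Polynomial.comp_X]
      rw [← hcomp, hq, Polynomial.zero_comp]
    have hki : ∀ i : Fin l, k i ≤ Qc.rootMultiplicity ((y i : ℝ) : ℂ) := by
      intro i
      have hk1 := hk i
      have h1 : k i - 1 < Qc.rootMultiplicity ((y i : ℝ) : ℂ) := by
        apply Polynomial.lt_rootMultiplicity_of_isRoot_iterate_derivative_of_mem_nonZeroDivisors'
          hQcne
        · intro m hm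
          exact hQv i m (by omega)
        · intro m _ hm0
          exact mem_nonZeroDivisors_of_ne_zero (by exact_mod_cast hm0)
      omega
    set t : Multiset ℂ := ∑ i : Fin l, (k i) • ({((y i : ℝ) : ℂ)} : Multiset ℂ) with ht
    have htle : t ≤ Qc.roots := by
      rw [Multiset.le_iff_count]
      intro a
      rw [ht, Multiset.count_sum']
      by_cases hex : ∃ i : Fin l, ((y i : ℝ) : ℂ) = a
      · obtain ⟨i₀, hi₀⟩ := hex
        rw [Finset.sum_eq_single i₀]
        · rw [Multiset.count_nsmul, Multiset.count_singleton, if_pos hi₀.symm, mul_one,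
            Polynomial.count_roots, ← hi₀]
          exact hki i₀
        · intro j _ hj
          rw [Multiset.count_nsmul, Multiset.count_singleton, if_neg, mul_zero]
          intro haj
          apply hj
          apply hy
          have : ((y j : ℝ) : ℂ) = ((y i₀ : ℝ) : ℂ) := by rw [hi₀, haj]
          exact_mod_cast this
        · intro habs; exact absurd (Finset.mem_univ i₀) habs
      · push_neg at hex
        rw [Finset.sum_eq_zero]
        · exact Nat.zero_le _
        · intro j _
          rw [Multiset.count_nsmul, Multiset.count_singleton, if_neg, mul_zero]
          intro haj; exact hex j haj.symm
    have hcardt : Multiset.card t = ∑ i, k i := by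
      rw [ht, card_finsum]
      simp
    have hcard : (∑ i, k i) ≤ Multiset.card Qc.roots := by
      rw [← hcardt]; exact Multiset.card_le_card htle
    have hdeg1 : Multiset.card Qc.roots ≤ Qc.natDegree := Polynomial.card_roots' Qc
    have hdegA : A.natDegree = 1 := by
      rw [hA]; exact Polynomial.natDegree_C_mul_X _ Complex.I_ne_zero
    have hdegQ : Qc.natDegree ≤ P.natDegree := by
      calc Qc.natDegree ≤ P.natDegree * A.natDegree := Polynomial.natDegree_comp_le
        _ = P.natDegree := by rw [hdegA, mul_one]
    have hpdag : ∀ q : Polynomial ℂ, (pdag q).natDegree ≤ q.natDegree := by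
      intro q
      calc (pdag q).natDegree
          ≤ (q.map (starRingEnd ℂ)).natDegree * (-Polynomial.X : Polynomial ℂ).natDegree :=
            Polynomial.natDegree_comp_le
        _ ≤ q.natDegree * 1 := by
            rw [Polynomial.natDegree_neg, Polynomial.natDegree_X]
            exact mul_le_mul_left Polynomial.natDegree_map_le 1
        _ = q.natDegree := mul_one _
    have hdegP : P.natDegree ≤ n₁ + n₂ := by
      apply le_trans (Polynomial.natDegree_sub_le _ _)
      apply max_le
      · exact le_trans (Polynomial.natDegree_mul_le)
          (add_le_add (le_trans (hpdag p₁) hp₁d) hp₂d)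
      · refine le_trans (Polynomial.natDegree_mul_le) ?_
        have h1 := le_trans (hpdag p₂) hp₂d
        omega
    omega
  -- conclude
  have hPP : pdag p₁ * p₂ = pdag p₂ * p₁ := by
    have := sub_eq_zero.mp hP0
    exact this
  rw [hr₁, hr₂, RatFunc.mk_eq_div, RatFunc.mk_eq_div,
    div_eq_div_iff (RatFunc.algebraMap_ne_zero hp₁0) (RatFunc.algebraMap_ne_zero hp₂0),
    ← map_mul, ← map_mul]
  exact congrArg _ hPP
end

section
/- Let n ∈ ℕ, ω ∈ (0, (n+1)π), and let r ∈ 𝒰_n be the unitary best approximation to e^{iωx}, with unique phase function g (max_{x∈[−1,1]} |g(x) − ωx| < π) and equioscillation points −1 = η_1 < ⋯ < η_{2n+2} = 1. Then the phase error attains a positive maximum at the first equioscillation point: g(η_j) − ωη_j = (−1)^{j+1} max_{x∈[−1,1]} |g(x) − ωx| for j = 1,…,2n+2; in particular g(−1) + ω = max_{x∈[−1,1]} |g(x) − ωx| > 0. -/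
open Polynomial

section MyAux
open Polynomial Finset

lemma my_arctan_deriv (μ ξ : ℝ) (hξ : ξ ≠ 0) (x : ℝ) :
    HasDerivAt (fun x => Real.arctan ((x - μ)/ξ)) (ξ / ((x - μ)^2 + ξ^2)) x := by
  have h1 : HasDerivAt (fun x : ℝ => (x - μ)/ξ) (1/ξ) x := by
    simpa using ((hasDerivAt_id x).sub_const μ).div_const ξ
  have h2 := (Real.hasDerivAt_arctan ((x - μ)/ξ)).comp x h1
  refine HasDerivAt.congr_deriv h2 ?_
  have h3 : (x - μ)^2 + ξ^2 ≠ 0 := by positivity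
  field_simp
  ring

lemma my_poly_bound (m : ℕ) (ω : ℝ) (hω : ω ≠ 0) (μ ξ : Fin m → ℝ) (hξ : ∀ j, ξ j ≠ 0)
    {k : ℕ} (hk : 2*m < k) (c : Fin k → ℝ) (hc : Function.Injective c)
    (h0 : ∀ i, 2*∑ j, ξ j/((c i - μ j)^2 + (ξ j)^2) - ω = 0) : False := by
  set Q : Fin m → ℝ[X] := fun j => (X - C (μ j))^2 + C ((ξ j)^2) with hQ
  have hdeg2 : ∀ j, ((X - C (μ j))^2 : ℝ[X]).degree = 2 := by
    intro j; rw [degree_pow, degree_X_sub_C]; rfl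
  have hQmonic : ∀ j, (Q j).Monic := by
    intro j
    refine ((monic_X_sub_C (μ j)).pow 2).add_of_left ?_
    rw [hdeg2 j]
    exact lt_of_le_of_lt degree_C_le (by norm_num)
  have hQdeg : ∀ j, (Q j).natDegree = 2 := by
    intro j
    have : (Q j).degree = 2 := by
      rw [hQ]
      rw [degree_add_eq_left_of_degree_lt]
      · exact hdeg2 j
      · rw [hdeg2 j]; exact lt_of_le_of_lt degree_C_le (by norm_num)
    exact natDegree_eq_of_degree_eq_some this
  set P : ℝ[X] := C 2 * ∑ j, C (ξ j) * ∏ l ∈ univ.erase j, Q l - C ω * ∏ j, Q j with hP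
  have hProdMonic : (∏ j, Q j).Monic := monic_prod_of_monic _ _ fun j _ => hQmonic j
  have hProdDeg : (∏ j, Q j).natDegree = 2*m := by
    rw [natDegree_prod _ _ (fun j _ => (hQmonic j).ne_zero)]
    simp [hQdeg, mul_comm]
  have hTermDeg : ∀ j : Fin m, (C (ξ j) * ∏ l ∈ univ.erase j, Q l).natDegree < 2*m := by
    intro j
    have h1 : (∏ l ∈ univ.erase j, Q l).natDegree = 2*(m-1) := by
      rw [natDegree_prod _ _ (fun l _ => (hQmonic l).ne_zero)]
      rw [Finset.sum_congr rfl (fun l _ => hQdeg l), Finset.sum_const,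
        Finset.card_erase_of_mem (mem_univ j), card_univ, Fintype.card_fin]
      simp [mul_comm]
    have h2 := natDegree_mul_le (p := C (ξ j)) (q := ∏ l ∈ univ.erase j, Q l)
    have hm : 1 ≤ m := j.pos
    simp [natDegree_C, h1] at h2 ⊢
    omega
  have hSumCoeff : (∑ j, C (ξ j) * ∏ l ∈ univ.erase j, Q l).coeff (2*m) = 0 := by
    rw [finset_sum_coeff]
    refine Finset.sum_eq_zero fun j _ => coeff_eq_zero_of_natDegree_lt (hTermDeg j)
  have hcoeff : P.coeff (2*m) = -ω := by
    have hpc : (∏ j : Fin m, Q j).coeff (2*m) = 1 := by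
      rw [← hProdDeg]; exact hProdMonic.coeff_natDegree
    rw [hP, coeff_sub, coeff_C_mul, coeff_C_mul, hSumCoeff, hpc]
    ring
  have hPne : P ≠ 0 := by
    intro h
    rw [h, coeff_zero] at hcoeff
    exact hω (by linarith)
  have hPdeg : P.natDegree ≤ 2*m := by
    refine le_trans (natDegree_sub_le _ _) (max_le ?_ ?_)
    · refine le_trans (natDegree_mul_le) ?_
      have := natDegree_sum_le_of_forall_le univ (fun j => C (ξ j) * ∏ l ∈ univ.erase j, Q l)
        (fun j _ => le_of_lt (hTermDeg j))
      simp [natDegree_C]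
      exact this
    · refine le_trans (natDegree_mul_le) ?_
      simp [natDegree_C, hProdDeg]
  have hqpos : ∀ j x, (0:ℝ) < (x - μ j)^2 + (ξ j)^2 := by
    intro j x; have := hξ j; positivity
  have heval : ∀ x : ℝ, P.eval x = (2*∑ j, ξ j/((x - μ j)^2 + (ξ j)^2) - ω) *
      ∏ j, ((x - μ j)^2 + (ξ j)^2) := by
    intro x
    have hQeval : ∀ j, (Q j).eval x = (x - μ j)^2 + (ξ j)^2 := by
      intro j; simp [hQ]
    rw [hP]
    rw [eval_sub, eval_mul, eval_mul, eval_C, eval_C, eval_finset_sum, eval_prod]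
    simp only [eval_mul, eval_C, eval_prod, hQeval]
    rw [sub_mul, mul_assoc, Finset.sum_mul]
    congr 1
    congr 1
    refine Finset.sum_congr rfl fun j _ => ?_
    rw [← Finset.mul_prod_erase univ (fun l => (x - μ l)^2 + (ξ l)^2) (mem_univ j)]
    rw [div_mul_eq_mul_div, mul_comm ((x - μ j)^2 + (ξ j)^2), mul_div_assoc,
      mul_div_assoc, div_self (ne_of_gt (hqpos j x)), mul_one]
  have hroots : ∀ i, P.eval (c i) = 0 := by
    intro i; rw [heval, h0 i, zero_mul]
  have hsub : univ.image c ⊆ P.roots.toFinset := by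
    intro x hx
    rw [Finset.mem_image] at hx
    obtain ⟨i, _, rfl⟩ := hx
    rw [Multiset.mem_toFinset, mem_roots hPne]
    exact hroots i
  have hcard : k ≤ P.natDegree := by
    calc k = (univ.image c).card := by
            rw [Finset.card_image_of_injective _ hc, card_univ, Fintype.card_fin]
      _ ≤ P.roots.toFinset.card := Finset.card_le_card hsub
      _ ≤ Multiset.card P.roots := Multiset.toFinset_card_le _
      _ ≤ P.natDegree := P.card_roots'
  omega

lemma my_G_hasDeriv (m : ℕ) (θ ω : ℝ) (μ ξ : Fin m → ℝ) (hξ : ∀ j, ξ j ≠ 0) (x : ℝ) :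
    HasDerivAt (fun x => θ + 2*∑ j, Real.arctan ((x - μ j)/(ξ j)) - ω * x)
      (2*∑ j, ξ j/((x - μ j)^2 + (ξ j)^2) - ω) x := by
  have hsum : HasDerivAt (fun x : ℝ => ∑ j, Real.arctan ((x - μ j)/(ξ j)))
      (∑ j, ξ j/((x - μ j)^2 + (ξ j)^2)) x :=
    HasDerivAt.fun_sum fun j _ => my_arctan_deriv (μ j) (ξ j) (hξ j) x
  have hlin : HasDerivAt (fun x : ℝ => ω * x) ω x := by
    simpa using (hasDerivAt_id x).const_mul ω
  exact ((hsum.const_mul 2).const_add θ).sub hlin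

lemma my_zeros_bound (m : ℕ) (θ ω : ℝ) (hω : ω ≠ 0) (μ ξ : Fin m → ℝ) (hξ : ∀ j, ξ j ≠ 0)
    (z : Fin (2*m+2) → ℝ) (hz : StrictMono z)
    (h0 : ∀ i, θ + 2*∑ j, Real.arctan ((z i - μ j)/(ξ j)) - ω * z i = 0) : False := by
  set G : ℝ → ℝ := fun x => θ + 2*∑ j, Real.arctan ((x - μ j)/(ξ j)) - ω * x with hGdef
  set D : ℝ → ℝ := fun x => 2*∑ j, ξ j/((x - μ j)^2 + (ξ j)^2) - ω with hDdef
  have hG : ∀ x, HasDerivAt G (D x) x := fun x => my_G_hasDeriv m θ ω μ ξ hξ x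
  have hGc : Continuous G := continuous_iff_continuousAt.2 fun x => (hG x).continuousAt
  have key : ∀ i : Fin (2*m+1), ∃ cI ∈ Set.Ioo (z i.castSucc) (z i.succ), D cI = 0 := by
    intro i
    exact exists_hasDerivAt_eq_zero (hz (Fin.castSucc_lt_succ (i := i))) hGc.continuousOn
      (by show G _ = G _; rw [hGdef]; simp only []; rw [h0, h0]) (fun x _ => hG x)
  choose c hmem hc0 using key
  have hcs : StrictMono c := by
    intro i j hij
    have h1 : c i < z i.succ := (hmem i).2
    have h2 : z j.castSucc < c j := (hmem j).1
    have h3 : z i.succ ≤ z j.castSucc := by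
      apply hz.monotone
      rw [Fin.le_def]
      simp only [Fin.val_succ, Fin.coe_castSucc]
      omega
    linarith
  exact my_poly_bound m ω hω μ ξ hξ (by omega) c hcs.injective hc0

end MyAux

/-- The phase error of the unitary best approximation attains a (positive)
maximum at the first equioscillation point: with equioscillation points
`−1 = η₁ < ⋯ < η_{2n+2} = 1` one has
`g(η_j) − ω η_j = (−1)^{j+1} max_{x∈[−1,1]} |g(x) − ωx|` (zero-based: `(−1)^j`), and in
particular `g(−1) + ω = max |g − ωx| > 0`. -/
theorem phase_error_max_at_first_point (n : ℕ) (ω : ℝ)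
    (hω : 0 < ω) (hω' : ω < ((n : ℝ) + 1) * Real.pi)
    (r : RatFunc ℂ) (hr : r ∈ unitaryClass n)
    (hbest : ∀ u ∈ unitaryClass n, errNorm ω r ≤ errNorm ω u)
    (g : ℝ → ℝ) (hg : IsPhaseFun n r g) (hgb : phaseErrSup ω g < Real.pi)
    (η : Fin (2 * n + 1 + 1) → ℝ) (hη : StrictMono η)
    (hη0 : η 0 = -1) (hη1 : η (Fin.last (2 * n + 1)) = 1)
    (halt : ∃ ε : ℝ, (ε = 1 ∨ ε = -1) ∧
      ∀ j : Fin (2 * n + 1 + 1),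
        g (η j) - ω * η j = ε * (-1 : ℝ) ^ (j : ℕ) * phaseErrSup ω g) :
    (∀ j : Fin (2 * n + 1 + 1),
      g (η j) - ω * η j = (-1 : ℝ) ^ (j : ℕ) * phaseErrSup ω g) ∧
    g (-1) + ω = phaseErrSup ω g ∧ 0 < phaseErrSup ω g := by
  set E := phaseErrSup ω g with hE
  obtain ⟨m, θ, μ, ξ, hmn, hξ, -, hgform, -⟩ := hg
  -- continuity
  have hgc : Continuous g := by
    have h1 : Continuous fun x : ℝ => θ + 2 * ∑ j, Real.arctan ((x - μ j) / ξ j) := by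
      refine continuous_const.add (continuous_const.mul ?_)
      exact continuous_finset_sum _ fun j _ =>
        Real.continuous_arctan.comp ((continuous_id.sub continuous_const).div_const _)
    exact (funext hgform : g = _) ▸ h1
  set f : ℝ → ℝ := fun x => g x - ω * x with hf
  have hfc : Continuous f := hgc.sub (continuous_const.mul continuous_id)
  have hbdd : BddAbove ((fun x : ℝ => |g x - ω * x|) '' Set.Icc (-1:ℝ) 1) :=
    (isCompact_Icc.image_of_continuousOn hfc.abs.continuousOn).bddAbove
  have hbound : ∀ x ∈ Set.Icc (-1:ℝ) 1, |g x - ω * x| ≤ E :=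
    fun x hx => le_csSup hbdd ⟨x, hx, rfl⟩
  have hE0 : 0 ≤ E := le_trans (abs_nonneg _) (hbound 1 (by norm_num))
  -- master contradiction: too many zeros of f
  have noZeros : ∀ z : Fin (2*m+2) → ℝ, StrictMono z → (∀ i, f (z i) = 0) → False := by
    intro z hzm hz0
    apply my_zeros_bound m θ ω (ne_of_gt hω) μ ξ hξ z hzm
    intro i
    have h1 := hgform (z i)
    have h2 := hz0 i
    rw [hf] at h2
    simp only [] at h2
    rw [← h1]
    linarith
  have hEpos : 0 < E := by
    rcases eq_or_lt_of_le hE0 with h | h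
    · exfalso
      set z : Fin (2*m+2) → ℝ := fun i => -1 + (i:ℝ)/(2*m+2) with hz
      have hden : (0:ℝ) < 2*m+2 := by positivity
      have hzm : StrictMono z := by
        intro i j hij
        have hij' : (i:ℝ) < (j:ℝ) := by exact_mod_cast hij
        simp only [hz]
        gcongr
      refine noZeros z hzm fun i => ?_
      have hiub : (i:ℝ) ≤ 2*(m:ℝ)+1 := by
        have := i.isLt
        have : (i:ℕ) ≤ 2*m+1 := by omega
        exact_mod_cast this
      have hzi : z i ∈ Set.Icc (-1:ℝ) 1 := by
        constructor
        · simp only [hz]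
          have : 0 ≤ (i:ℝ)/(2*m+2) := by positivity
          linarith
        · simp only [hz]
          have h1 : (i:ℝ)/(2*m+2) ≤ 1 := by
            rw [div_le_one hden]; linarith
          linarith
      have := hbound (z i) hzi
      rw [← h] at this
      have habs : |g (z i) - ω * z i| = 0 := le_antisymm this (abs_nonneg _)
      rw [hf]
      simp only []
      exact abs_eq_zero.mp habs
    · exact h
  obtain ⟨ε, hε, hosc⟩ := halt
  rcases hε with hε | hε
  · subst hε
    refine ⟨fun j => by simpa using hosc j, ?_, hEpos⟩
    have h0 := hosc 0
    rw [hη0] at h0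
    norm_num at h0
    linarith
  · exfalso
    subst hε
    -- interior zeros
    have hζ : ∀ i : Fin (2*n+1), ∃ ζ ∈ Set.Ioo (η i.castSucc) (η i.succ), f ζ = 0 := by
      intro i
      have ha := hosc i.castSucc
      have hb := hosc i.succ
      have hia : ((i.castSucc : Fin (2*n+1+1)) : ℕ) = (i:ℕ) := rfl
      have hib : ((i.succ : Fin (2*n+1+1)) : ℕ) = (i:ℕ)+1 := rfl
      rw [hia] at ha; rw [hib] at hb
      set a := η i.castSucc with hadef
      set b := η i.succ with hbdef
      have hab : a < b := hη (Fin.castSucc_lt_succ (i := i))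
      have hfa : f a = -1 * (-1:ℝ)^(i:ℕ) * E := ha
      have hfb : f b = -1 * (-1:ℝ)^((i:ℕ)+1) * E := hb
      rcases neg_one_pow_eq_or ℝ (i:ℕ) with hp | hp
      · -- f a = -E, f b = E
        have hfa' : f a = -E := by rw [hfa, hp]; ring
        have hfb' : f b = E := by rw [hfb, pow_succ, hp]; ring
        have h0mem : (0:ℝ) ∈ Set.Ioo (f a) (f b) := by
          rw [hfa', hfb']; constructor <;> linarith
        obtain ⟨ζ, hm, he⟩ := intermediate_value_Ioo (le_of_lt hab) hfc.continuousOn h0mem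
        exact ⟨ζ, hm, he⟩
      · have hfa' : f a = E := by rw [hfa, hp]; ring
        have hfb' : f b = -E := by rw [hfb, pow_succ, hp]; ring
        have h0mem : (0:ℝ) ∈ Set.Ioo (f b) (f a) := by
          rw [hfa', hfb']; constructor <;> linarith
        obtain ⟨ζ, hm, he⟩ := intermediate_value_Ioo' (le_of_lt hab) hfc.continuousOn h0mem
        exact ⟨ζ, hm, he⟩
    choose ζ hζmem hζ0 using hζ
    -- far-left positive point
    set x₀ : ℝ := min (-2) ((θ - m*Real.pi - 1)/ω) with hx₀
    have hx0lt : x₀ < -1 := lt_of_le_of_lt (min_le_left _ _) (by norm_num)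
    have hfx0 : 0 < f x₀ := by
      have hsum : -((m:ℝ) * (Real.pi/2)) ≤ ∑ j, Real.arctan ((x₀ - μ j)/ξ j) := by
        have h1 : ∀ j ∈ Finset.univ, -(Real.pi/2) ≤ Real.arctan ((x₀ - μ j)/ξ j) :=
          fun j _ => le_of_lt (Real.neg_pi_div_two_lt_arctan _)
        have h2 := Finset.sum_le_sum h1
        simpa using h2
      have hωx₀ : ω * x₀ ≤ θ - m*Real.pi - 1 := by
        have hle : x₀ ≤ (θ - m*Real.pi - 1)/ω := min_le_right _ _
        have := mul_le_mul_of_nonneg_left hle (le_of_lt hω)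
        rwa [mul_div_cancel₀ _ (ne_of_gt hω)] at this
      rw [hf]
      simp only []
      rw [hgform x₀]
      linarith
    have hfm1 : f (-1) < 0 := by
      have h0 := hosc 0
      rw [hη0] at h0
      norm_num at h0
      rw [hf]; simp only []
      linarith
    obtain ⟨ζ₀, hζ₀mem, hζ₀0⟩ :=
      intermediate_value_Ioo' (le_of_lt hx0lt) hfc.continuousOn
        (Set.mem_Ioo.mpr ⟨hfm1, hfx0⟩)
    -- assemble 2m+2 zeros
    have him : ∀ i : Fin (2*m+2), (i:ℕ) ≠ 0 → (i:ℕ)-1 < 2*n+1 := by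
      intro i hi; have := i.isLt; omega
    set z : Fin (2*m+2) → ℝ :=
      fun i => if hi : (i:ℕ) = 0 then ζ₀ else ζ ⟨(i:ℕ)-1, him i hi⟩ with hzdef
    have hζlt : ∀ k : Fin (2*n+1), η k.castSucc < ζ k ∧ ζ k < η k.succ :=
      fun k => ⟨(hζmem k).1, (hζmem k).2⟩
    have hzm : StrictMono z := by
      intro i j hij
      have hij' : (i:ℕ) < (j:ℕ) := hij
      have hjne : (j:ℕ) ≠ 0 := by omega
      by_cases hi : (i:ℕ) = 0
      · simp only [hzdef, dif_pos hi, dif_neg hjne]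
        have h1 : ζ₀ < -1 := hζ₀mem.2
        have h2 : η 0 ≤ η (⟨(j:ℕ)-1, him j hjne⟩ : Fin (2*n+1)).castSucc :=
          hη.monotone (Fin.zero_le _)
        have h3 := (hζlt ⟨(j:ℕ)-1, him j hjne⟩).1
        rw [hη0] at h2
        linarith
      · simp only [hzdef, dif_neg hi, dif_neg hjne]
        set a : Fin (2*n+1) := ⟨(i:ℕ)-1, him i hi⟩
        set b : Fin (2*n+1) := ⟨(j:ℕ)-1, him j hjne⟩
        have h1 := (hζlt a).2
        have h2 := (hζlt b).1
        have h3 : η a.succ ≤ η b.castSucc := by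
          apply hη.monotone
          rw [Fin.le_def]
          simp only [Fin.val_succ, Fin.coe_castSucc, a, b]
          omega
        linarith
    refine noZeros z hzm fun i => ?_
    by_cases hi : (i:ℕ) = 0
    · simp only [hzdef, dif_pos hi]; exact hζ₀0
    · simp only [hzdef, dif_neg hi]; exact hζ0 _
end
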